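/- arXiv:2506.16291 — 8 statements merged into one kernel-verified Lean document; each statement's English description precedes it below -/
import Mathlib

section
/- Let $\psi:\mathbb{N}\to\mathbb{R}_{>0}$ satisfy $\liminf_{n\to\infty} \psi(n)^{1/n} = b \in (1,\infty)$. Then for every $\epsilon \in (0, b-1)$ and every $N\in\mathbb{N}$, there exists an integer $n^* > N$ such that $\psi(n) > (b-\epsilon)^{n-n^*}\psi(n^*)$ for all $n > n^*$, and $\psi(n) > (b+\epsilon)^{n-n^*}\psi(n^*)$ for all $n < n^*$. -/
open Filter Real

/-- If `ψ : ℕ → ℝ_{>0}` has `liminf ψ(n)^{1/n} = b ∈ (1,∞)`, then for every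
`ε ∈ (0, b-1)` and every `N` there is `n* > N` with `ψ n > (b-ε)^(n-n*) ψ n*` for `n > n*`
and `ψ n > (b+ε)^(n-n*) ψ n*` for `n < n*`. -/
theorem stmt4 (ψ : ℕ → ℝ) (hψ : ∀ n, 0 < ψ n) (b : ℝ) (hb : 1 < b)
    (hliminf : Filter.liminf (fun n => ψ n ^ ((n : ℝ)⁻¹)) Filter.atTop = b)
    (ε : ℝ) (hε0 : 0 < ε) (hεb : ε < b - 1) (N : ℕ) :
    ∃ nstar : ℕ, N < nstar ∧
      (∀ n, nstar < n → (b - ε) ^ ((n : ℝ) - (nstar : ℝ)) * ψ nstar < ψ n) ∧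
      (∀ n, n < nstar → (b + ε) ^ ((n : ℝ) - (nstar : ℝ)) * ψ nstar < ψ n) := by
  classical
  have hbε0 : (0:ℝ) < b - ε := by linarith
  have hbε1 : (1:ℝ) < b - ε := by linarith
  have hBε0 : (0:ℝ) < b + ε := by linarith
  set u : ℕ → ℝ := fun n => ψ n ^ ((n : ℝ)⁻¹) with hu
  set f : ℕ → ℝ := fun n => ψ n / (b - ε) ^ (n : ℝ) with hf
  set g : ℕ → ℝ := fun n => ψ n / (b + ε) ^ (n : ℝ) with hg
  have hfpos : ∀ n, 0 < f n := fun n => div_pos (hψ n) (rpow_pos_of_pos hbε0 _)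
  have hgpos : ∀ n, 0 < g n := fun n => div_pos (hψ n) (rpow_pos_of_pos hBε0 _)
  set ρ : ℝ := (b - ε) / (b + ε) with hρ
  have hρ0 : 0 < ρ := div_pos hbε0 hBε0
  have hρ1 : ρ < 1 := (div_lt_one hBε0).2 (by linarith)
  have hgf : ∀ n : ℕ, g n = f n * ρ ^ (n : ℝ) := by
    intro n
    have h1 : ((b - ε) / (b + ε)) ^ (n:ℝ) = (b - ε) ^ (n:ℝ) / (b + ε) ^ (n:ℝ) :=
      Real.div_rpow hbε0.le hBε0.le _
    have hne1 : (b - ε) ^ (n:ℝ) ≠ 0 := (rpow_pos_of_pos hbε0 (n:ℝ)).ne'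
    have hne2 : (b + ε) ^ (n:ℝ) ≠ 0 := (rpow_pos_of_pos hBε0 (n:ℝ)).ne'
    simp only [hg, hf, hρ, h1]
    field_simp
  -- unpower: (u n) ^ (n:ℝ) = ψ n for n ≥ 1
  have hup : ∀ n : ℕ, 1 ≤ n → (u n) ^ (n:ℝ) = ψ n := by
    intro n hn
    have hn0 : ((n:ℝ)) ≠ 0 := Nat.cast_ne_zero.2 (by omega)
    rw [hu]
    rw [← Real.rpow_mul (hψ n).le, inv_mul_cancel₀ hn0, Real.rpow_one]
  -- Step A: f tends to infinity (in the weak form we need)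
  have hev : ∀ B : ℝ, ∀ᶠ n in atTop, B < f n := by
    intro B
    have hc10 : (0:ℝ) < b - ε/2 := by linarith
    have hbdd : Filter.IsBoundedUnder (· ≥ ·) atTop u :=
      ⟨0, by
        rw [Filter.eventually_map]
        exact Filter.Eventually.of_forall fun n => Real.rpow_nonneg (hψ n).le _⟩
    have h1 : ∀ᶠ n in atTop, b - ε/2 < u n :=
      Filter.eventually_lt_of_lt_liminf (by rw [hliminf]; linarith) hbdd
    have hq1 : 1 < (b - ε/2) / (b - ε) := (one_lt_div hbε0).2 (by linarith)
    have h2 : ∀ᶠ n : ℕ in atTop, B < ((b - ε/2) / (b - ε)) ^ n :=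
      (tendsto_pow_atTop_atTop_of_one_lt hq1).eventually_gt_atTop B
    filter_upwards [h1, h2, eventually_ge_atTop 1] with n hn hn2 hn1
    have hψn : (b - ε/2) ^ (n:ℝ) < ψ n := by
      have hpos : (0:ℝ) < (n:ℝ) := by exact_mod_cast hn1
      have := Real.rpow_lt_rpow hc10.le hn hpos
      rwa [hup n hn1] at this
    have hfn : ((b - ε/2) / (b - ε)) ^ (n:ℝ) < f n := by
      have hstep : (b - ε/2) ^ (n:ℝ) / (b - ε) ^ (n:ℝ) < ψ n / (b - ε) ^ (n:ℝ) := by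
        gcongr
      calc ((b - ε/2) / (b - ε)) ^ (n:ℝ)
          = (b - ε/2) ^ (n:ℝ) / (b - ε) ^ (n:ℝ) := Real.div_rpow hc10.le hbε0.le _
        _ < ψ n / (b - ε) ^ (n:ℝ) := hstep
        _ = f n := rfl
    calc B < ((b - ε/2) / (b - ε)) ^ n := hn2
      _ = ((b - ε/2) / (b - ε)) ^ (n:ℝ) := (Real.rpow_natCast _ n).symm
      _ < f n := hfn
  -- Step B: g gets arbitrarily small, arbitrarily late
  have hfreqg : ∀ δ : ℝ, 0 < δ → ∀ M : ℕ, ∃ n, M ≤ n ∧ g n < δ := by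
    intro δ hδ M
    have hc20 : (0:ℝ) < b + ε/2 := by linarith
    have hfreq : ∀ M' : ℕ, ∃ n, M' ≤ n ∧ u n < b + ε/2 := by
      intro M'
      by_contra hcon
      push_neg at hcon
      have hmem : b + ε/2 ∈ {a : ℝ | ∀ᶠ n in atTop, a ≤ u n} :=
        eventually_atTop.2 ⟨M', fun n hn => hcon n hn⟩
      rw [Filter.liminf_eq] at hliminf
      by_cases hbdd : BddAbove {a : ℝ | ∀ᶠ n in atTop, a ≤ u n}
      · have := le_csSup hbdd hmem
        rw [hliminf] at this
        linarith
      · rw [Real.sSup_of_not_bddAbove hbdd] at hliminf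
        linarith
    have hq0 : (0:ℝ) ≤ (b + ε/2) / (b + ε) := by positivity
    have hq1 : (b + ε/2) / (b + ε) < 1 := (div_lt_one hBε0).2 (by linarith)
    have h2 : ∀ᶠ n : ℕ in atTop, ((b + ε/2) / (b + ε)) ^ n < δ :=
      (tendsto_pow_atTop_nhds_zero_of_lt_one hq0 hq1).eventually_lt_const hδ
    obtain ⟨M₁, hM₁⟩ := eventually_atTop.1 h2
    obtain ⟨n, hn, hnu⟩ := hfreq (max (max M M₁) 1)
    have hn1 : 1 ≤ n := le_trans (le_max_right _ 1) hn
    have hnM : M ≤ n := le_trans (le_trans (le_max_left M M₁) (le_max_left _ 1)) hn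
    have hnM₁ : M₁ ≤ n := le_trans (le_trans (le_max_right M M₁) (le_max_left _ 1)) hn
    refine ⟨n, hnM, ?_⟩
    have hψn : ψ n < (b + ε/2) ^ (n:ℝ) := by
      have hpos : (0:ℝ) < (n:ℝ) := by exact_mod_cast hn1
      have := Real.rpow_lt_rpow (Real.rpow_nonneg (hψ n).le _) hnu hpos
      rwa [hup n hn1] at this
    have hgn : g n < ((b + ε/2) / (b + ε)) ^ (n:ℝ) := by
      have hstep : ψ n / (b + ε) ^ (n:ℝ) < (b + ε/2) ^ (n:ℝ) / (b + ε) ^ (n:ℝ) := by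
        gcongr
      calc g n = ψ n / (b + ε) ^ (n:ℝ) := rfl
        _ < (b + ε/2) ^ (n:ℝ) / (b + ε) ^ (n:ℝ) := hstep
        _ = ((b + ε/2) / (b + ε)) ^ (n:ℝ) := (Real.div_rpow hc20.le hBε0.le _).symm
    calc g n < ((b + ε/2) / (b + ε)) ^ (n:ℝ) := hgn
      _ = ((b + ε/2) / (b + ε)) ^ n := Real.rpow_natCast _ n
      _ < δ := hM₁ n hnM₁
  -- Step C: record minimum of g after N
  set s0 : Finset ℕ := Finset.range (N + 1) with hs0
  have hs0ne : s0.Nonempty := ⟨N, by simp [hs0]⟩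
  set δ : ℝ := s0.inf' hs0ne g with hδdef
  have hδpos : 0 < δ := by
    rw [hδdef, Finset.lt_inf'_iff]
    exact fun i _ => hgpos i
  have hδle : ∀ n ≤ N, δ ≤ g n := by
    intro n hn
    exact Finset.inf'_le g (by simp [hs0]; omega)
  obtain ⟨n₁, hn₁ge, hn₁g⟩ := hfreqg δ hδpos (N + 1)
  have hPex : ∃ n, N < n ∧ g n < δ := ⟨n₁, by omega, hn₁g⟩
  set n₀ : ℕ := Nat.find hPex with hn₀def
  obtain ⟨hn₀N, hn₀g⟩ : N < n₀ ∧ g n₀ < δ := Nat.find_spec hPex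
  have hrec : ∀ n < n₀, g n₀ < g n := by
    intro n hn
    rcases le_or_gt n N with h | h
    · exact lt_of_lt_of_le hn₀g (hδle n h)
    · have := Nat.find_min hPex hn
      push_neg at this
      exact lt_of_lt_of_le hn₀g (this h)
  -- Step D: pick nstar as the largest minimizer of f on [n₀, M']
  obtain ⟨M, hM⟩ := eventually_atTop.1 (hev (f n₀))
  set M' : ℕ := max M n₀ with hM'def
  set s2 : Finset ℕ := Finset.Icc n₀ M' with hs2
  have hn₀s2 : n₀ ∈ s2 := by simp [hs2, hM'def]
  have hs2ne : s2.Nonempty := ⟨n₀, hn₀s2⟩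
  set m : ℝ := s2.inf' hs2ne f with hm
  set t : Finset ℕ := s2.filter (fun n => f n = m) with ht
  have htne : t.Nonempty := by
    obtain ⟨i, hi, hfi⟩ := Finset.exists_mem_eq_inf' hs2ne f
    exact ⟨i, Finset.mem_filter.2 ⟨hi, hfi.symm⟩⟩
  set nstar : ℕ := t.max' htne with hns
  have hnstart : nstar ∈ t := Finset.max'_mem t htne
  have hnstars2 : nstar ∈ s2 := (Finset.mem_filter.1 hnstart).1
  have hfstar : f nstar = m := (Finset.mem_filter.1 hnstart).2
  have hnsrange : n₀ ≤ nstar ∧ nstar ≤ M' := Finset.mem_Icc.1 hnstars2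
  have hmle : ∀ n ∈ s2, m ≤ f n := fun n hn => Finset.inf'_le f hn
  have hfn₀ : m ≤ f n₀ := hmle n₀ hn₀s2
  -- key facts
  have keyf : ∀ n, nstar < n → f nstar < f n := by
    intro n hn
    rcases le_or_gt n M' with h | h
    · have hns2 : n ∈ s2 := Finset.mem_Icc.2 ⟨le_trans hnsrange.1 hn.le, h⟩
      rcases lt_or_eq_of_le (hmle n hns2) with hlt | heq
      · rwa [hfstar]
      · exfalso
        have : n ∈ t := Finset.mem_filter.2 ⟨hns2, heq.symm⟩
        have := Finset.le_max' t n this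
        omega
    · have hMn : M ≤ n := le_trans (le_max_left M n₀) h.le
      calc f nstar = m := hfstar
        _ ≤ f n₀ := hfn₀
        _ < f n := hM n hMn
  have keyg : ∀ n, n < nstar → g nstar < g n := by
    intro n hn
    rcases lt_or_ge n n₀ with h | h
    · -- g nstar ≤ g n₀ < g n
      have h1 : g nstar ≤ g n₀ := by
        rw [hgf, hgf]
        calc f nstar * ρ ^ ((nstar:ℕ) : ℝ) ≤ f n₀ * ρ ^ ((nstar:ℕ) : ℝ) := by
              have : f nstar ≤ f n₀ := hfstar ▸ hfn₀
              exact mul_le_mul_of_nonneg_right this (Real.rpow_nonneg hρ0.le _)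
          _ ≤ f n₀ * ρ ^ ((n₀:ℕ) : ℝ) := by
              have hexp : ((n₀:ℕ):ℝ) ≤ ((nstar:ℕ):ℝ) := by exact_mod_cast hnsrange.1
              exact mul_le_mul_of_nonneg_left
                (Real.rpow_le_rpow_of_exponent_ge hρ0 hρ1.le hexp) (hfpos n₀).le
      exact lt_of_le_of_lt h1 (hrec n h)
    · -- n₀ ≤ n < nstar, so n ∈ s2 and f n ≥ f nstar, exponent strict
      have hns2 : n ∈ s2 := Finset.mem_Icc.2 ⟨h, le_trans hn.le hnsrange.2⟩
      have h1 : f nstar ≤ f n := hfstar ▸ hmle n hns2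
      rw [hgf, hgf]
      calc f nstar * ρ ^ ((nstar:ℕ) : ℝ) < f nstar * ρ ^ ((n:ℕ) : ℝ) := by
            have hexp : ((n:ℕ):ℝ) < ((nstar:ℕ):ℝ) := by exact_mod_cast hn
            exact mul_lt_mul_of_pos_left
              (Real.rpow_lt_rpow_of_exponent_gt hρ0 hρ1 hexp) (hfpos nstar)
        _ ≤ f n * ρ ^ ((n:ℕ) : ℝ) :=
            mul_le_mul_of_nonneg_right h1 (Real.rpow_nonneg hρ0.le _)
  -- assemble
  refine ⟨nstar, lt_of_lt_of_le hn₀N hnsrange.1, ?_, ?_⟩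
  · intro n hn
    have h := keyf n hn
    rw [hf] at h
    simp only at h
    have h' := (div_lt_div_iff₀ (rpow_pos_of_pos hbε0 ((nstar:ℕ):ℝ))
      (rpow_pos_of_pos hbε0 ((n:ℕ):ℝ))).1 h
    rw [Real.rpow_sub hbε0, div_mul_eq_mul_div,
      div_lt_iff₀ (rpow_pos_of_pos hbε0 _)]
    linear_combination h'
  · intro n hn
    have h := keyg n hn
    rw [hg] at h
    simp only at h
    have h' := (div_lt_div_iff₀ (rpow_pos_of_pos hBε0 ((nstar:ℕ):ℝ))
      (rpow_pos_of_pos hBε0 ((n:ℕ):ℝ))).1 h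
    rw [Real.rpow_sub hBε0, div_mul_eq_mul_div,
      div_lt_iff₀ (rpow_pos_of_pos hBε0 _)]
    linear_combination h'
end

section
/- Let $\psi:\mathbb{N}\to\mathbb{R}_{>0}$ satisfy $\lim_{n\to\infty} \psi(n)/n = \infty$ and $\liminf_{n\to\infty} \psi(n)^{1/n} = 1$. Then for every $\epsilon > 0$ and every $N\in\mathbb{N}$, there exists an integer $n^* > N$ such that $n^*\psi(n) > n\psi(n^*)$ for all $n > n^*$, and $\psi(n) > (1+\epsilon)^{n-n^*}\psi(n^*)$ for all $n < n^*$. -/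
lemma aux_pow (ε : ℝ) (hε : 0 < ε) (m k : ℕ) (hm : 1 < ε * m) (hk : 0 < k) :
    ((m : ℝ) + k) / m < (1 + ε) ^ k := by
  have hm0 : (0:ℝ) < m := by
    rcases Nat.eq_zero_or_pos m with h | h
    · subst h; simp at hm; linarith
    · exact_mod_cast h
  rw [div_lt_iff₀ hm0]
  have hb : 1 + (k:ℝ) * ε ≤ (1+ε)^k := by
    have := one_add_mul_le_pow (by linarith : (-2:ℝ) ≤ ε) k
    linarith
  have hk' : (1:ℝ) ≤ k := by exact_mod_cast hk
  nlinarith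

lemma aux_g (ε : ℝ) (hε : 0 < ε) (m k : ℕ) (hm : 1 < ε * m) (hk : 0 < k)
    (x y : ℝ) (hx : 0 < x) (hy : 0 < y)
    (h : y / ((m : ℝ) + k) ≤ x / m) :
    y / (1+ε)^(m+k) < x / (1+ε)^m := by
  have hm0 : (0:ℝ) < m := by
    rcases Nat.eq_zero_or_pos m with h0 | h0
    · subst h0; simp at hm; linarith
    · exact_mod_cast h0
  have hmk0 : (0:ℝ) < (m:ℝ) + k := by positivity
  have hpm : (0:ℝ) < (1+ε)^m := by positivity
  have hpk : (0:ℝ) < (1+ε)^k := by positivity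
  have h1 : y * m ≤ x * ((m:ℝ) + k) := by
    rw [div_le_div_iff₀ hmk0 hm0] at h; linarith
  have h2 : ((m : ℝ) + k) < (1 + ε) ^ k * m := by
    have := aux_pow ε hε m k hm hk
    rw [div_lt_iff₀ hm0] at this; exact this
  have h3 : y < x * (1+ε)^k := by nlinarith
  rw [pow_add, div_lt_div_iff₀ (by positivity) hpm]
  nlinarith


/-- If `ψ : ℕ → ℝ_{>0}` has `ψ(n)/n → ∞` and `liminf ψ(n)^{1/n} = 1`, then for
every `ε > 0` and every `N` there is `n* > N` with `n* ψ n > n ψ n*` for `n > n*` and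
`ψ n > (1+ε)^(n-n*) ψ n*` for `n < n*`. -/
theorem stmt5 (ψ : ℕ → ℝ) (hψ : ∀ n, 0 < ψ n)
    (hlin : Filter.Tendsto (fun n => ψ n / (n : ℝ)) Filter.atTop Filter.atTop)
    (hliminf : Filter.liminf (fun n => ψ n ^ ((n : ℝ)⁻¹)) Filter.atTop = 1)
    (ε : ℝ) (hε0 : 0 < ε) (N : ℕ) :
    ∃ nstar : ℕ, N < nstar ∧
      (∀ n : ℕ, nstar < n → (n : ℝ) * ψ nstar < (nstar : ℝ) * ψ n) ∧
      (∀ n, n < nstar → (1 + ε) ^ ((n : ℝ) - (nstar : ℝ)) * ψ nstar < ψ n) := by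
  classical
  set r : ℝ := 1 + ε/2 with hrdef
  have hr1 : 1 < r := by simp [hrdef]; linarith
  have hrε : r < 1 + ε := by simp [hrdef]; linarith
  have hε1 : (0:ℝ) < 1 + ε := by linarith
  -- frequently ψ n ^ (1/n) < r
  have hfreq : ∃ᶠ n in Filter.atTop, ψ n ^ ((n:ℝ)⁻¹) < r := by
    by_contra hc
    rw [Filter.not_frequently] at hc
    have hc' : ∀ᶠ n in Filter.atTop, r ≤ ψ n ^ ((n:ℝ)⁻¹) := hc.mono fun n h => not_lt.mp h
    have hmem : r ∈ {a | ∀ᶠ n in Filter.atTop, a ≤ ψ n ^ ((n:ℝ)⁻¹)} := hc'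
    rw [Filter.liminf_eq] at hliminf
    by_cases hbdd : BddAbove {a | ∀ᶠ n in Filter.atTop, a ≤ ψ n ^ ((n:ℝ)⁻¹)}
    · have := le_csSup hbdd hmem
      rw [hliminf] at this; linarith
    · rw [Real.sSup_of_not_bddAbove hbdd] at hliminf; linarith
  set g : ℕ → ℝ := fun n => ψ n / (1+ε)^n with hgdef
  have hgpos : ∀ n, 0 < g n := fun n => div_pos (hψ n) (by positivity)
  -- g gets below any positive bound beyond any M
  have hgsmall : ∀ c : ℝ, 0 < c → ∀ M : ℕ, ∃ n, M < n ∧ g n < c := by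
    intro c hc M
    set q : ℝ := r / (1+ε) with hqdef
    have hq0 : 0 < q := div_pos (by linarith) hε1
    have hq1 : q < 1 := (div_lt_one hε1).mpr hrε
    have hev : ∀ᶠ n : ℕ in Filter.atTop, q ^ n < c := by
      have := tendsto_pow_atTop_nhds_zero_of_lt_one hq0.le hq1
      exact this.eventually_lt_const hc
    have hev2 : ∀ᶠ n : ℕ in Filter.atTop, q ^ n < c ∧ M < n ∧ 1 ≤ n := by
      filter_upwards [hev, Filter.eventually_gt_atTop M, Filter.eventually_ge_atTop 1] with n h1 h2 h3
      exact ⟨h1, h2, h3⟩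
    obtain ⟨n, hn1, hn2⟩ := (hfreq.and_eventually hev2).exists
    obtain ⟨hqn, hMn, h1n⟩ := hn2
    refine ⟨n, hMn, ?_⟩
    have hn0 : (n:ℝ) ≠ 0 := by positivity -- wrong if n = 0; but 1 ≤ n
    have hψr : ψ n < r ^ n := by
      have hrec : ψ n = (ψ n ^ ((n:ℝ)⁻¹)) ^ n := by
        rw [← Real.rpow_natCast (ψ n ^ ((n:ℝ)⁻¹)) n, ← Real.rpow_mul (hψ n).le]
        rw [inv_mul_cancel₀ (by exact_mod_cast Nat.one_le_iff_ne_zero.mp h1n)]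
        simp
      rw [hrec]
      exact pow_lt_pow_left₀ hn1 (Real.rpow_nonneg (hψ n).le _) (by omega)
    have : g n < q ^ n := by
      rw [hgdef]
      simp only
      rw [hqdef, div_pow, div_lt_div_iff₀ (by positivity) (by positivity)]
      nlinarith [pow_pos hε1 n]
    linarith
  -- choose M
  set M : ℕ := max N (Nat.ceil ε⁻¹) + 1 with hMdef
  have hMN : N < M := by omega
  have hMε : ∀ n : ℕ, M ≤ n → 1 < ε * n := by
    intro n hn
    have h1 : ε⁻¹ < (M:ℝ) := by
      have : (Nat.ceil ε⁻¹ : ℝ) < M := by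
        have : Nat.ceil ε⁻¹ < M := by omega
        exact_mod_cast this
      calc ε⁻¹ ≤ (Nat.ceil ε⁻¹ : ℝ) := Nat.le_ceil _
        _ < M := this
    have h2 : (M:ℝ) ≤ n := by exact_mod_cast hn
    have := lt_of_lt_of_le h1 h2
    rw [inv_lt_iff_one_lt_mul₀ (by positivity)] at this
    linarith [this]
  -- minimum of g over range (M+1)
  have hne : (Finset.range (M+1)).Nonempty := ⟨0, by simp⟩
  set cmin : ℝ := (Finset.range (M+1)).inf' hne g with hcmindef
  have hcminpos : 0 < cmin := by
    obtain ⟨a, ha, hae⟩ := Finset.exists_mem_eq_inf' hne g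
    rw [hcmindef, hae]; exact hgpos a
  have hcminle : ∀ m, m ≤ M → cmin ≤ g m := by
    intro m hm
    exact Finset.inf'_le g (by simp; omega)
  -- n1 : least record low beyond M
  have hex : ∃ n, M < n ∧ g n < cmin := hgsmall cmin hcminpos M
  set n1 : ℕ := Nat.find hex with hn1def
  obtain ⟨hn1M, hgn1⟩ : M < n1 ∧ g n1 < cmin := Nat.find_spec hex
  have hrecord : ∀ m, m < n1 → g n1 < g m := by
    intro m hm
    by_cases hmM : m ≤ M
    · exact lt_of_lt_of_le hgn1 (hcminle m hmM)
    · have := Nat.find_min hex hm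
      push_neg at this
      have := this (by omega)
      linarith
  -- K : beyond K, ψ n / n exceeds ψ n1 / n1
  obtain ⟨K, hK⟩ := (hlin.eventually_gt_atTop (ψ n1 / n1)).exists_forall_of_atTop
  -- finite candidate set
  set T : Finset ℕ := (Finset.range K).filter (fun n => n1 ≤ n ∧ ψ n / n ≤ ψ n1 / n1) with hTdef
  have hn1K : n1 < K := by
    by_contra h
    push_neg at h
    exact absurd (hK n1 h) (lt_irrefl _)
  have hn1T : n1 ∈ T := by
    rw [hTdef]; simp [hn1K]
  set μ : ℝ := T.inf' ⟨n1, hn1T⟩ (fun n => ψ n / n) with hμdef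
  have hμn1 : μ ≤ ψ n1 / n1 := Finset.inf'_le _ hn1T
  have hμall : ∀ n, n1 ≤ n → μ ≤ ψ n / n := by
    intro n hn
    by_cases hT : n ∈ T
    · exact Finset.inf'_le _ hT
    · have : ψ n1 / n1 < ψ n / n := by
        by_cases hnK : n < K
        · rw [hTdef] at hT; simp [hnK, hn] at hT; linarith [hT]
        · exact hK n (by omega)
      linarith
  obtain ⟨a, haT, hainf⟩ := Finset.exists_mem_eq_inf' ⟨n1, hn1T⟩ (fun n => ψ n / n)
  set A : Finset ℕ := T.filter (fun n => ψ n / n = μ) with hAdef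
  have hAne : A.Nonempty := ⟨a, by rw [hAdef]; simp [haT]; rw [hμdef, hainf]⟩
  set nstar : ℕ := A.max' hAne with hnstardef
  have hnstarA : nstar ∈ A := A.max'_mem hAne
  have hnstarT : nstar ∈ T := Finset.mem_filter.mp hnstarA |>.1
  have hnstarμ : ψ nstar / nstar = μ := (Finset.mem_filter.mp hnstarA).2
  have hn1star : n1 ≤ nstar := ((Finset.mem_filter.mp hnstarT).2).1
  have hstarle : ψ nstar / nstar ≤ ψ n1 / n1 := ((Finset.mem_filter.mp hnstarT).2).2
  have hnstarpos : 0 < nstar := by omega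
  -- (a) strict minimality to the right
  have ha : ∀ n, nstar < n → ψ nstar / nstar < ψ n / n := by
    intro n hn
    have hn1n : n1 ≤ n := by omega
    have hμn := hμall n hn1n
    rcases lt_or_eq_of_le hμn with h | h
    · rw [hnstarμ]; exact h
    · exfalso
      have hnK : n < K := by
        by_contra hc
        push_neg at hc
        have := hK n hc
        rw [← h] at this
        linarith
      have hnT : n ∈ T := by
        rw [hTdef]; simp [hnK, hn1n]; rw [← h]; linarith
      have hnA : n ∈ A := by rw [hAdef]; simp [hnT]; exact h.symm
      have := Finset.le_max' A n hnA
      omega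
  -- (b) in g-form
  have hb : ∀ n, n < nstar → g nstar < g n := by
    intro n hn
    by_cases hcase : n < n1
    · -- g nstar ≤ g n1 < g n
      have h1 : g nstar ≤ g n1 := by
        rcases Nat.eq_or_lt_of_le hn1star with he | hlt
        · rw [← he]
        · have hk : 0 < nstar - n1 := by omega
          have hcast : ((n1:ℝ) + ((nstar - n1 : ℕ) : ℝ)) = (nstar : ℝ) := by
            push_cast [Nat.cast_sub hn1star]; ring
          have h2 : ψ nstar / ((n1:ℝ) + ((nstar - n1 : ℕ) : ℝ)) ≤ ψ n1 / n1 := by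
            rw [hcast]; exact hstarle
          have := aux_g ε hε0 n1 (nstar - n1) (hMε n1 hn1M.le) hk (ψ n1) (ψ nstar)
            (hψ n1) (hψ nstar) h2
          have hsum : n1 + (nstar - n1) = nstar := by omega
          rw [hsum] at this
          exact this.le
      exact lt_of_le_of_lt h1 (hrecord n hcase)
    · -- n1 ≤ n < nstar
      push_neg at hcase
      have hk : 0 < nstar - n := by omega
      have hle : ψ nstar / ((n:ℝ) + ((nstar - n : ℕ) : ℝ)) ≤ ψ n / n := by
        have hcast : ((n:ℝ) + ((nstar - n : ℕ) : ℝ)) = (nstar : ℝ) := by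
          push_cast [Nat.cast_sub hn.le]; ring
        rw [hcast, hnstarμ]
        exact hμall n hcase
      have := aux_g ε hε0 n (nstar - n) (hMε n (by omega)) hk (ψ n) (ψ nstar)
        (hψ n) (hψ nstar) hle
      have hsum : n + (nstar - n) = nstar := by omega
      rw [hsum] at this
      exact this
  refine ⟨nstar, by omega, ?_, ?_⟩
  · intro n hn
    have := ha n hn
    have hnpos : (0:ℝ) < n := by exact_mod_cast (by omega : 0 < n)
    have hnsp : (0:ℝ) < nstar := by exact_mod_cast hnstarpos
    rw [div_lt_div_iff₀ hnsp hnpos] at this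
    nlinarith
  · intro n hn
    have := hb n hn
    rw [hgdef] at this
    simp only at this
    have hrw : (1+ε) ^ ((n:ℝ) - (nstar:ℝ)) = (1+ε)^(n:ℕ) / (1+ε)^(nstar:ℕ) := by
      rw [Real.rpow_sub hε1, Real.rpow_natCast, Real.rpow_natCast]
    rw [hrw]
    rw [div_lt_div_iff₀ (by positivity) (by positivity)] at this
    rw [div_mul_eq_mul_div, div_lt_iff₀ (by positivity)]
    nlinarith
end

section
/- Let $\psi:\mathbb{N}\to\mathbb{R}_{>0}$ satisfy $\lim_{n\to\infty}\psi(n)^{1/n} = \infty$. Then there exists a non-decreasing function $g:\mathbb{N}\to\mathbb{R}_{>0}$ such that (a) $g(n)\leq\psi(n)$ for all $n$, (b) $\limsup_{n\to\infty} g(n)/\psi(n) = 1$, and (c) $\lim_{n\to\infty} g(n+1)/g(n) = \infty$. -/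
/-! Let `u n` be the running minimum `inf_{k ≥ n} ψ(k)^{1/k}`, which is monotone, tends to
infinity and satisfies `u(n)^n ≤ ψ(n)`. With `v = max 1 (u / 2)`, the scale `B n = v(n)^n` is
monotone, has `B(n+1)/B(n) ≥ v(n+1) → ∞`, and `ψ/B ≥ 2^n` eventually. Then `g = B · c`, where `c`
is the running minimum of `ψ/B`, inherits the ratio growth of `B` since `c` is monotone, stays
below `ψ`, and equals `ψ` wherever the running minimum of `ψ/B` is attained, which happens
infinitely often. -/

open Filter

section TailMin

variable {β : Type*} [ConditionallyCompleteLinearOrder β] {φ : ℕ → β}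

noncomputable def tailMin (φ : ℕ → β) (n : ℕ) : β := ⨅ k : Set.Ici n, φ k

theorem Filter.Tendsto.exists_tailMin_eq (hφ : Tendsto φ atTop atTop) (n : ℕ) :
    ∃ m, n ≤ m ∧ IsMinOn φ (Set.Ici n) m ∧ tailMin φ n = φ m := by
  have hshift : Tendsto (fun j => φ (j + n)) cofinite atTop := by
    rw [Nat.cofinite_eq_atTop]
    exact hφ.comp (tendsto_add_atTop_nat n)
  obtain ⟨j, hj⟩ := hshift.exists_forall_le
  have hmin : IsMinOn φ (Set.Ici n) (j + n) := fun k (hk : n ≤ k) => by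
    simpa [Nat.sub_add_cancel hk] using hj (k - n)
  exact ⟨j + n, Nat.le_add_left n j, hmin, hmin.iInf_eq (Nat.le_add_left n j)⟩

theorem tailMin_le (hφ : Tendsto φ atTop atTop) {n k : ℕ} (hnk : n ≤ k) : tailMin φ n ≤ φ k := by
  obtain ⟨m, -, hmin, hm⟩ := hφ.exists_tailMin_eq n
  exact hm ▸ hmin hnk

theorem monotone_tailMin (hφ : Tendsto φ atTop atTop) : Monotone (tailMin φ) := fun a b hab => by
  obtain ⟨m, hbm, -, hm⟩ := hφ.exists_tailMin_eq b
  exact hm ▸ tailMin_le hφ (hab.trans hbm)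

theorem tendsto_tailMin (hφ : Tendsto φ atTop atTop) : Tendsto (tailMin φ) atTop atTop := by
  refine tendsto_atTop_atTop.2 fun C => ?_
  obtain ⟨N, hN⟩ := tendsto_atTop_atTop.1 hφ C
  refine ⟨N, fun n hn => ?_⟩
  obtain ⟨m, hnm, -, hm⟩ := hφ.exists_tailMin_eq n
  exact hm ▸ hN m (hn.trans hnm)

theorem frequently_tailMin_eq (hφ : Tendsto φ atTop atTop) : ∃ᶠ m in atTop, tailMin φ m = φ m := by
  refine frequently_atTop.2 fun n => ?_
  obtain ⟨m, hnm, -, hm⟩ := hφ.exists_tailMin_eq n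
  exact ⟨m, hnm, le_antisymm (tailMin_le hφ le_rfl) (hm ▸ monotone_tailMin hφ hnm)⟩

end TailMin

theorem le_pow_succ_div_pow {a b : ℝ} (ha : 0 < a) (hab : a ≤ b) (n : ℕ) :
    b ≤ b ^ (n + 1) / a ^ n := by
  rw [le_div_iff₀ (pow_pos ha n), pow_succ']
  exact mul_le_mul_of_nonneg_left (pow_le_pow_left₀ ha.le hab n) (ha.le.trans hab)

theorem monotone_pow_self {v : ℕ → ℝ} (hv : Monotone v) (hv₁ : ∀ n, 1 ≤ v n) :
    Monotone fun n => v n ^ n := fun a b hab =>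
  (pow_le_pow_right₀ (hv₁ a) hab).trans (pow_le_pow_left₀ (zero_le_one.trans (hv₁ a)) (hv hab) b)

theorem tendsto_pow_succ_div_pow_self {v : ℕ → ℝ} (hv : Monotone v) (hv₁ : ∀ n, 1 ≤ v n)
    (hv_top : Tendsto v atTop atTop) :
    Tendsto (fun n => v (n + 1) ^ (n + 1) / v n ^ n) atTop atTop :=
  tendsto_atTop_mono
    (fun n => le_pow_succ_div_pow (one_pos.trans_le (hv₁ n)) (hv n.le_succ) n)
    (hv_top.comp (tendsto_add_atTop_nat 1))

theorem exists_scale_of_tendsto_rpow_inv (ψ : ℕ → ℝ) (hψ : ∀ n, 0 < ψ n)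
    (h : Tendsto (fun n => ψ n ^ ((n : ℝ)⁻¹)) atTop atTop) :
    ∃ B : ℕ → ℝ, (∀ n, 0 < B n) ∧ Monotone B ∧
      Tendsto (fun n => B (n + 1) / B n) atTop atTop ∧ Tendsto (fun n => ψ n / B n) atTop atTop := by
  set u := tailMin fun n => ψ n ^ ((n : ℝ)⁻¹)
  set v : ℕ → ℝ := fun n => max 1 (u n / 2)
  have hv₁ : ∀ n, 1 ≤ v n := fun n => le_max_left _ _
  have hv : Monotone v := fun a b hab =>
    max_le_max le_rfl (div_le_div_of_nonneg_right (monotone_tailMin h hab) zero_le_two)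
  have hu_top : Tendsto u atTop atTop := tendsto_tailMin h
  refine ⟨fun n => v n ^ n, fun n => pow_pos (one_pos.trans_le (hv₁ n)) n,
    monotone_pow_self hv hv₁,
    tendsto_pow_succ_div_pow_self hv hv₁ (tendsto_atTop_mono (fun n => le_max_right _ _)
      (hu_top.atTop_div_const two_pos)), ?_⟩
  refine tendsto_atTop_mono' _ ?_ (tendsto_pow_atTop_atTop_of_one_lt one_lt_two)
  filter_upwards [hu_top.eventually_ge_atTop 2, eventually_ge_atTop 1] with n hu2 hn
  have hpow : u n ^ n ≤ ψ n := by
    have := (Real.le_rpow_inv_iff_of_pos (by linarith) (hψ n).le (by positivity)).1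
      (tailMin_le h le_rfl)
    exact_mod_cast this
  have hvn : v n = u n / 2 := max_eq_right (by linarith)
  rw [hvn, le_div_iff₀ (by positivity), ← mul_pow]
  calc (2 * (u n / 2)) ^ n = u n ^ n := by ring
  _ ≤ ψ n := hpow
theorem limsup_eq_of_eventually_le_of_frequently_eq {ι β : Type*} [ConditionallyCompleteLattice β]
    {f : Filter ι} {u : ι → β} {a : β} (hle : ∀ᶠ i in f, u i ≤ a) (hfreq : ∃ᶠ i in f, u i = a) :
    limsup u f = a := by
  have hge : ∀ x, (∀ᶠ i in f, u i ≤ x) → a ≤ x := fun x hx => by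
    obtain ⟨i, hi, hix⟩ := (hfreq.and_eventually hx).exists
    exact hi ▸ hix
  exact le_antisymm (limsup_le_of_le ⟨a, hge⟩ hle)
    (le_limsup_of_le (isBoundedUnder_of_eventually_le hle) hge)

theorem exists_monotone_minorant_of_scale (ψ B : ℕ → ℝ) (hψ : ∀ n, 0 < ψ n) (hB : ∀ n, 0 < B n)
    (hB_mono : Monotone B) (hB_ratio : Tendsto (fun n => B (n + 1) / B n) atTop atTop)
    (hψB : Tendsto (fun n => ψ n / B n) atTop atTop) :
    ∃ g : ℕ → ℝ, (∀ n, 0 < g n) ∧ Monotone g ∧ (∀ n, g n ≤ ψ n) ∧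
      limsup (fun n => g n / ψ n) atTop = 1 ∧
      Tendsto (fun n => g (n + 1) / g n) atTop atTop := by
  set c := tailMin fun n => ψ n / B n
  have hc : ∀ n, 0 < c n := fun n => by
    obtain ⟨m, -, -, hm⟩ := hψB.exists_tailMin_eq n
    exact (show c n = ψ m / B m from hm) ▸ div_pos (hψ m) (hB m)
  have hc_mono : Monotone c := monotone_tailMin hψB
  have hg_le : ∀ n, B n * c n ≤ ψ n := fun n => (le_div_iff₀' (hB n)).1 (tailMin_le hψB le_rfl)
  refine ⟨fun n => B n * c n, fun n => mul_pos (hB n) (hc n),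
    hB_mono.mul hc_mono (fun n => (hB n).le) (fun n => (hc n).le), hg_le, ?_, ?_⟩
  · refine limsup_eq_of_eventually_le_of_frequently_eq
      (Eventually.of_forall fun n => (div_le_one (hψ n)).2 (hg_le n)) ?_
    refine (frequently_tailMin_eq hψB).mono fun n hn => ?_
    change B n * c n / ψ n = 1
    rw [show c n = ψ n / B n from hn, mul_div_cancel₀ _ (hB n).ne', div_self (hψ n).ne']
  · refine tendsto_atTop_mono (fun n => ?_) hB_ratio
    rw [mul_div_mul_comm]
    exact le_mul_of_one_le_right (div_pos (hB _) (hB n)).le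
      ((one_le_div (hc n)).2 (hc_mono n.le_succ))

/-- If `ψ : ℕ → ℝ_{>0}` satisfies `ψ(n)^{1/n} → ∞`, then there is a
non-decreasing `g : ℕ → ℝ_{>0}` with `g ≤ ψ`, `limsup g/ψ = 1`, and `g(n+1)/g(n) → ∞`. -/
theorem stmt6 (ψ : ℕ → ℝ) (hψ : ∀ n, 0 < ψ n)
    (h : Filter.Tendsto (fun n => ψ n ^ ((n : ℝ)⁻¹)) Filter.atTop Filter.atTop) :
    ∃ g : ℕ → ℝ, (∀ n, 0 < g n) ∧ Monotone g ∧ (∀ n, g n ≤ ψ n) ∧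
      Filter.limsup (fun n => g n / ψ n) Filter.atTop = 1 ∧
      Filter.Tendsto (fun n => g (n + 1) / g n) Filter.atTop Filter.atTop := by
  obtain ⟨B, hB, hB_mono, hB_ratio, hψB⟩ := exists_scale_of_tendsto_rpow_inv ψ hψ h
  exact exists_monotone_minorant_of_scale ψ B hψ hB hB_mono hB_ratio hψB
end

section
/- Let $\psi:\mathbb{N}\to\mathbb{R}_{>0}$ satisfy $\liminf_{n\to\infty}\psi(n)^{1/n} = b \in (1,\infty)$. Then there exists a non-decreasing function $g:\mathbb{N}\to\mathbb{R}_{>0}$ such that (a) $g(n)\leq\psi(n)$ for all $n$, (b) $\limsup_{n\to\infty} g(n)/\psi(n) = 1$, and (c) $\lim_{n\to\infty} g(n+1)/g(n) = b$. -/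
open Filter Finset Real Topology

/-!
Write `ψ n = bⁿ · exp (u n)`. The hypothesis says that for every `ε > 0`, eventually
`-ε n ≤ u n`, and frequently `u n ≤ ε n`. We take `g n = bⁿ · exp (v n)`, where `v` is the
largest minorant of `u` that is `1`-Lipschitz for the pseudometric `|S m - S n|` and `S` is the
sequence of partial sums of steps `η n → 0`. Then `v (n + 1) - v n → 0`, and it suffices to make
the steps large enough that `u + S → ∞` while `u - S` is unbounded below (along a subsequence
on which `u n / n → 0`): these two conditions force `v` to touch `u` infinitely often.
-/

noncomputable def lipschitzMinorant (u S : ℕ → ℝ) (n : ℕ) : ℝ := ⨅ j, u j + |S j - S n|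

namespace lipschitzMinorant

variable {u S : ℕ → ℝ}

theorem bddBelow_range (h : BddBelow (Set.range (u + S))) (n : ℕ) :
    BddBelow (Set.range fun j => u j + |S j - S n|) := by
  obtain ⟨C, hC⟩ := h
  refine ⟨C - S n, ?_⟩
  rintro _ ⟨j, rfl⟩
  have : C ≤ u j + S j := hC ⟨j, rfl⟩
  linarith [le_abs_self (S j - S n)]

theorem le (h : BddBelow (Set.range (u + S))) (n : ℕ) : lipschitzMinorant u S n ≤ u n :=
  ciInf_le_of_le (bddBelow_range h n) n (by simp)

theorem abs_sub_le (h : BddBelow (Set.range (u + S))) (m n : ℕ) :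
    |lipschitzMinorant u S m - lipschitzMinorant u S n| ≤ |S m - S n| := by
  have key : ∀ m n, lipschitzMinorant u S m ≤ lipschitzMinorant u S n + |S m - S n| := by
    intro m n
    rw [← sub_le_iff_le_add]
    refine le_ciInf fun j => ?_
    have : lipschitzMinorant u S m ≤ u j + |S j - S m| := ciInf_le (bddBelow_range h m) j
    linarith [_root_.abs_sub_le (S j) (S n) (S m), abs_sub_comm (S n) (S m)]
  rw [abs_sub_le_iff]
  constructor
  · linarith [key m n]
  · linarith [key n m, abs_sub_comm (S m) (S n)]

theorem frequently_eq (hS : Monotone S) (hV : Tendsto (u + S) atTop atTop)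
    (hW : ¬BddBelow (Set.range (u - S))) : ∃ᶠ n in atTop, lipschitzMinorant u S n = u n := by
  -- `q` is chosen so that `u - S` is smaller there than on `[0, N]`, `k + q` minimises `u + S`
  -- on `[q, ∞)`, and the touching point `p` minimises `u - S` on `[0, k + q]`.
  rw [frequently_atTop]
  intro N
  obtain ⟨_, ⟨q, rfl⟩, hq⟩ := not_bddBelow_iff.1 hW
    ((range (N + 1)).inf' nonempty_range_add_one (u - S))
  obtain ⟨k, hk⟩ := ((tendsto_add_atTop_iff_nat q).2 hV).mono_left Nat.cofinite_eq_atTop.le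
    |>.exists_forall_le
  obtain ⟨p, hp, hp_min⟩ := (range (k + q + 1)).exists_min_image (u - S) nonempty_range_add_one
  have hp_le : p ≤ k + q := Nat.lt_succ_iff.1 (mem_range.1 hp)
  have hpq : (u - S) p ≤ (u - S) q := hp_min q (mem_range.2 (by omega))
  refine ⟨p, ?_, le_antisymm (le (bddBelow_range_of_tendsto_atTop_atTop hV) p)
    (le_ciInf fun j => ?_)⟩
  · by_contra! hpN
    exact (hpq.trans_lt hq).not_ge (inf'_le (u - S) (b := p) (mem_range.2 (by omega)))
  · show u p ≤ u j + |S j - S p|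
    rcases le_or_gt j (k + q) with hj | hj
    · have : (u - S) p ≤ (u - S) j := hp_min j (mem_range.2 (by omega))
      simp only [Pi.sub_apply] at this
      linarith [neg_abs_le (S j - S p)]
    · have h_tail : (u + S) (k + q) ≤ (u + S) (j - q + q) := hk (j - q)
      rw [Nat.sub_add_cancel (by omega)] at h_tail
      have : (u - S) p ≤ (u - S) (k + q) := hp_min _ (mem_range.2 (by omega))
      simp only [Pi.sub_apply, Pi.add_apply] at this h_tail
      linarith [hS hp_le, le_abs_self (S j - S p)]

end lipschitzMinorant

theorem exists_tendsto_zero_sum_range_sub_tendsto_atTop (f : ℕ → ℝ)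
    (hf : ∀ ε > 0, ∀ᶠ n in atTop, f n ≤ ε * n) {β : ℝ} (hβ : 0 < β) :
    ∃ η : ℕ → ℝ, (∀ n, 0 ≤ η n ∧ η n ≤ β) ∧ Tendsto η atTop (𝓝 0) ∧
      Tendsto (fun n => ∑ i ∈ range n, η i - f n) atTop atTop := by
  set c : ℕ → ℝ := fun m => max (f m / m) 0
  have hc : ∀ ε > 0, ∃ N, ∀ m ≥ N, c m ≤ ε := fun ε hε =>
    (eventually_atTop.1 (hf ε hε)).imp fun N hN m hm =>
      max_le (div_le_of_le_mul₀ m.cast_nonneg hε.le (by linarith [hN m hm])) hε.le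
  obtain ⟨M, hM⟩ := hc (β / 2) (half_pos hβ)
  set δ : ℕ → ℝ := fun n => ⨆ k, c (max n M + k)
  have hbdd : ∀ n, BddAbove (Set.range fun k => c (max n M + k)) := fun n =>
    ⟨β / 2, by rintro _ ⟨k, rfl⟩; exact hM _ (by omega)⟩
  have δ_nonneg : ∀ n, 0 ≤ δ n := fun n => (le_max_right _ _).trans (le_ciSup (hbdd n) 0)
  have δ_le : ∀ n, δ n ≤ β / 2 := fun n => ciSup_le fun k => hM _ (by omega)
  have δ_anti : Antitone δ := fun m n hmn => ciSup_le fun k =>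
    le_ciSup_of_le (hbdd m) (max n M - max m M + k) <| by
      rw [show max m M + (max n M - max m M + k) = max n M + k by omega]
  have le_δ : ∀ n ≥ M, c n ≤ δ n := fun n hn =>
    le_ciSup_of_le (hbdd n) 0 (by rw [max_eq_left hn, add_zero])
  have δ_tendsto : Tendsto δ atTop (𝓝 0) := by
    refine tendsto_order.2
      ⟨fun a ha => .of_forall fun n => ha.trans_le (δ_nonneg n), fun ε hε => ?_⟩
    obtain ⟨N, hN⟩ := hc (ε / 2) (half_pos hε)
    exact eventually_atTop.2 ⟨N, fun n hn =>
      (ciSup_le fun k => hN _ (by omega)).trans_lt (half_lt_self hε)⟩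
  -- `δ` is antitone, so `∑ i < n, δ i ≥ n δ n ≥ f n`; the harmonic term makes the gap diverge
  refine ⟨fun i => δ i + β / 2 * (1 / (i + 1)), fun n => ⟨?_, ?_⟩, ?_, ?_⟩
  · have := δ_nonneg n
    positivity
  · have : 1 / ((n : ℝ) + 1) ≤ 1 :=
      div_le_one_of_le₀ (by linarith [n.cast_nonneg (α := ℝ)]) (by positivity)
    nlinarith [δ_le n]
  · simpa using δ_tendsto.add (tendsto_one_div_add_atTop_nhds_zero_nat.const_mul (β / 2))
  · refine tendsto_atTop_mono' _ ?_
      (tendsto_sum_range_one_div_nat_succ_atTop.const_mul_atTop (half_pos hβ))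
    filter_upwards [eventually_ge_atTop (max M 1)] with n hn
    have hn0 : (0 : ℝ) < n := by exact_mod_cast (show 0 < n by omega)
    have f_le : f n ≤ n * δ n := by
      have := (le_max_left _ _).trans (le_δ n (le_of_max_le_left hn))
      rwa [div_le_iff₀ hn0, mul_comm] at this
    have sum_δ : n * δ n ≤ ∑ i ∈ range n, δ i := by
      simpa using card_nsmul_le_sum (range n) δ (δ n) fun i hi => δ_anti (mem_range.1 hi).le
    rw [sum_add_distrib, ← mul_sum]
    linarith

theorem exists_le_frequently_eq_tendsto_sub_zero (u : ℕ → ℝ)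
    (h_lower : ∀ ε > 0, ∀ᶠ n in atTop, -u n ≤ ε * n)
    (h_upper : ∀ ε > 0, ∃ᶠ n in atTop, u n ≤ ε * n) {β : ℝ} (hβ : 0 < β) :
    ∃ v : ℕ → ℝ, (∀ n, v n ≤ u n) ∧ (∀ n, |v (n + 1) - v n| ≤ β) ∧
      Tendsto (fun n => v (n + 1) - v n) atTop (𝓝 0) ∧ ∃ᶠ n in atTop, v n = u n := by
  classical
  obtain ⟨φ, hφ, hφu⟩ := extraction_forall_of_frequently fun k : ℕ =>
    h_upper (1 / (k + 1)) Nat.one_div_pos_of_nat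
  set f : ℕ → ℝ := fun n => if n ∈ Set.range φ then |u n| else -u n
  have neg_le_f : ∀ n, -u n ≤ f n := fun n => by
    dsimp only [f]
    split_ifs
    exacts [neg_le_abs _, le_rfl]
  have le_f : ∀ k, u (φ k) ≤ f (φ k) := fun k => by
    simp only [f, Set.mem_range_self, if_true]
    exact le_abs_self _
  have hf : ∀ ε > 0, ∀ᶠ n in atTop, f n ≤ ε * n := by
    intro ε hε
    obtain ⟨K, hK⟩ := exists_nat_one_div_lt hε
    filter_upwards [h_lower ε hε, eventually_ge_atTop (φ K)] with n hn hKn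
    dsimp only [f]
    split_ifs with h
    · obtain ⟨k, rfl⟩ := h
      have hkK : (K : ℝ) ≤ k := by exact_mod_cast hφ.le_iff_le.1 hKn
      refine abs_le'.2 ⟨(hφu k).trans (mul_le_mul_of_nonneg_right ?_ (Nat.cast_nonneg _)), hn⟩
      exact (one_div_le_one_div_of_le (by positivity) (by linarith)).trans hK.le
    · exact hn
  obtain ⟨η, hη_bound, hη_tendsto, hη_sum⟩ :=
    exists_tendsto_zero_sum_range_sub_tendsto_atTop f hf hβ
  set S : ℕ → ℝ := fun n => ∑ i ∈ range n, η i
  have hS : Monotone S := monotone_nat_of_le_succ fun n => by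
    simp only [S, sum_range_succ, le_add_iff_nonneg_right, (hη_bound n).1]
  have hV : Tendsto (u + S) atTop atTop :=
    tendsto_atTop_mono (fun n => by simp only [Pi.add_apply]; linarith [neg_le_f n]) hη_sum
  have hW : ¬BddBelow (Set.range (u - S)) := by
    rintro ⟨C, hC⟩
    obtain ⟨k, hk⟩ := ((hη_sum.comp hφ.tendsto_atTop).eventually_gt_atTop (-C)).exists
    have : C ≤ u (φ k) - S (φ k) := hC ⟨φ k, rfl⟩
    simp only [Function.comp_apply] at hk
    linarith [le_f k]
  have hbdd := bddBelow_range_of_tendsto_atTop_atTop hV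
  have hstep : ∀ n, |lipschitzMinorant u S (n + 1) - lipschitzMinorant u S n| ≤ η n := fun n => by
    simpa [S, sum_range_succ, abs_of_nonneg (hη_bound n).1] using
      lipschitzMinorant.abs_sub_le hbdd (n + 1) n
  exact ⟨lipschitzMinorant u S, lipschitzMinorant.le hbdd,
    fun n => (hstep n).trans (hη_bound n).2, squeeze_zero_norm hstep hη_tendsto,
    lipschitzMinorant.frequently_eq hS hV hW⟩

theorem limsup_eq_of_le_of_frequently_eq {ι α : Type*} [ConditionallyCompleteLinearOrder α]
    {l : Filter ι} {a : ι → α} {c : α} (hle : ∀ᶠ i in l, a i ≤ c) (heq : ∃ᶠ i in l, a i = c) :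
    limsup a l = c :=
  have hge : ∃ᶠ i in l, c ≤ a i := heq.mono fun _ h => h.ge
  le_antisymm (limsup_le_of_le (.of_frequently_ge hge) hle)
    (le_limsup_of_frequently_le hge (isBoundedUnder_of_eventually_le hle))

theorem eventually_lt_and_frequently_lt_of_liminf_eq {ι : Type*} {l : Filter ι} {x : ι → ℝ}
    {b : ℝ} (h : liminf x l = b) (hb : b ≠ 0) :
    (∀ c < b, ∀ᶠ i in l, c < x i) ∧ ∀ c > b, ∃ᶠ i in l, x i < c := by
  -- `liminf` of an unbounded or uncobounded real sequence is the junk value `0`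
  have hbdd : l.IsBoundedUnder (· ≥ ·) x := by
    by_contra hx
    exact hb (h ▸ Real.liminf_of_not_isBoundedUnder hx)
  have hcobdd : l.IsCoboundedUnder (· ≥ ·) x := by
    by_contra hx
    exact hb (h ▸ Real.liminf_of_not_isCoboundedUnder hx)
  exact ⟨fun c hc => eventually_lt_of_lt_liminf (h ▸ hc) hbdd,
    fun c hc => frequently_lt_of_liminf_lt hcobdd (h ▸ hc)⟩

theorem exp_lt_rpow_inv_natCast_iff {x : ℝ} (hx : 0 < x) {n : ℕ} (hn : 0 < n) (y : ℝ) :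
    exp y < x ^ (n : ℝ)⁻¹ ↔ n * y < log x := by
  rw [rpow_def_of_pos hx, exp_lt_exp, lt_mul_inv_iff₀ (by positivity), mul_comm]

theorem rpow_inv_natCast_lt_exp_iff {x : ℝ} (hx : 0 < x) {n : ℕ} (hn : 0 < n) (y : ℝ) :
    x ^ (n : ℝ)⁻¹ < exp y ↔ log x < n * y := by
  rw [rpow_def_of_pos hx, exp_lt_exp, mul_inv_lt_iff₀ (by positivity), mul_comm]

theorem eventually_and_frequently_of_liminf_rpow_inv_eq (ψ : ℕ → ℝ) (hψ : ∀ n, 0 < ψ n)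
    {b : ℝ} (hb : 0 < b) (h : liminf (fun n => ψ n ^ (n : ℝ)⁻¹) atTop = b) :
    (∀ ε > 0, ∀ᶠ n in atTop, -(log (ψ n) - n * log b) ≤ ε * n) ∧
      ∀ ε > 0, ∃ᶠ n in atTop, log (ψ n) - n * log b ≤ ε * n := by
  obtain ⟨h_lower, h_upper⟩ := eventually_lt_and_frequently_lt_of_liminf_eq h hb.ne'
  refine ⟨fun ε hε => ?_, fun ε hε => ?_⟩
  · have : exp (log b - ε) < b := (exp_lt_exp.2 (by linarith)).trans_eq (exp_log hb)
    filter_upwards [h_lower _ this, eventually_gt_atTop 0] with n hn hn0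
    rw [exp_lt_rpow_inv_natCast_iff (hψ n) hn0] at hn
    linarith
  · have : b < exp (log b + ε) := (exp_log hb).symm.trans_lt (exp_lt_exp.2 (by linarith))
    refine ((h_upper _ this).and_eventually (eventually_gt_atTop 0)).mono
      fun n ⟨hn, hn0⟩ => ?_
    rw [rpow_inv_natCast_lt_exp_iff (hψ n) hn0] at hn
    linarith

/-- If `ψ : ℕ → ℝ_{>0}` satisfies `liminf ψ(n)^{1/n} = b ∈ (1,∞)`, then there is
a non-decreasing `g : ℕ → ℝ_{>0}` with `g ≤ ψ`, `limsup g/ψ = 1`, and `g(n+1)/g(n) → b`. -/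
theorem stmt7 (ψ : ℕ → ℝ) (hψ : ∀ n, 0 < ψ n) (b : ℝ) (hb : 1 < b)
    (h : Filter.liminf (fun n => ψ n ^ ((n : ℝ)⁻¹)) Filter.atTop = b) :
    ∃ g : ℕ → ℝ, (∀ n, 0 < g n) ∧ Monotone g ∧ (∀ n, g n ≤ ψ n) ∧
      Filter.limsup (fun n => g n / ψ n) Filter.atTop = 1 ∧
      Filter.Tendsto (fun n => g (n + 1) / g n) Filter.atTop (nhds b) := by
  obtain ⟨h_lower, h_upper⟩ :=
    eventually_and_frequently_of_liminf_rpow_inv_eq ψ hψ (by linarith) h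
  obtain ⟨v, hv_le, hv_step, hv_tendsto, hv_eq⟩ :=
    exists_le_frequently_eq_tendsto_sub_zero _ h_lower h_upper (log_pos hb)
  set g : ℕ → ℝ := fun n => exp (v n + n * log b)
  have hψ_eq : ∀ n, exp (log (ψ n) - n * log b + n * log b) = ψ n := fun n => by
    rw [sub_add_cancel, exp_log (hψ n)]
  have hg_ratio : ∀ n, g (n + 1) / g n = exp (v (n + 1) - v n + log b) := fun n => by
    simp only [g, ← exp_sub]
    push_cast
    ring_nf
  have hgψ : ∀ n, g n ≤ ψ n := fun n =>
    (hψ_eq n).symm ▸ exp_le_exp.2 (by linarith [hv_le n])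
  refine ⟨g, fun n => exp_pos _, monotone_nat_of_le_succ fun n => ?_, hgψ, ?_, ?_⟩
  · simp only [g, exp_le_exp]
    push_cast
    linarith [(abs_le.1 (hv_step n)).1]
  · refine limsup_eq_of_le_of_frequently_eq (.of_forall fun n => ?_) (hv_eq.mono fun n hn => ?_)
    · exact (div_le_one (hψ n)).2 (hgψ n)
    · simp only [g, hn, hψ_eq, div_self (hψ n).ne']
  · have := (hv_tendsto.add_const (log b)).rexp
    rwa [zero_add, exp_log (by linarith), ← funext hg_ratio] at this
end

section
/- Let $\psi:\mathbb{N}\to\mathbb{R}_{>0}$ satisfy $\lim_{n\to\infty}\psi(n)/n = \infty$ and $\liminf_{n\to\infty}\psi(n)^{1/n} = 1$. Then there exists a non-decreasing function $g:\mathbb{N}\to\mathbb{R}_{>0}$ such that (a) $g(n)\leq\psi(n)$ for all $n$, (b) $\limsup_{n\to\infty} g(n)/\psi(n) = 1$, (c) $\lim_{n\to\infty} g(n)/n = \infty$, and (d) $\lim_{n\to\infty} g(n+1)/g(n) = 1$. -/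
/-!
Replace `ψ` by its tail minimum `m n = min_{j ≥ n} ψ j`: it is monotone, superlinear, and equal
to `ψ` at infinitely many points. Then put `g (n + 1) = min (m (n + 1)) (g n * r n)` with rates
`r n → 1`. Because `liminf ψ n ^ (1/n) = 1`, for every `k` there are arbitrarily late `p` with
`ψ p ≤ (1 + 1/(k+1)) ^ p`; keeping the rate at `(1 + 1/(k+1)) ^ 2` until such a point lets the
unconstrained growth of `g` overtake `m` there, so `g` touches `m`, hence `ψ`, infinitely often
and `limsup g/ψ = 1`. Rates of at least `(n + 2)/(n + 1)` keep `g n / (n + 1)` from decreasing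
between touching points, which makes `g` superlinear.
-/

open Filter Finset Topology

lemma exists_monotone_tail_min {β : Type*} [LinearOrder β] {f : ℕ → β}
    (hf : Tendsto f atTop atTop) :
    ∃ k : ℕ → ℕ, (∀ n, n ≤ k n) ∧ Monotone (f ∘ k) ∧ ∀ n, f (k n) ≤ f n := by
  rw [← Nat.cofinite_eq_atTop] at hf
  choose k hk hmin using fun n : ℕ => hf.exists_within_forall_le (Set.nonempty_Ici (a := n))
  exact ⟨k, hk, fun a b hab => hmin a (k b) (hab.trans (hk b)), fun n => hmin n n Set.self_mem_Ici⟩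

lemma Monotone.frequently_eq_of_frequently_eq_comp {β : Type*} [PartialOrder β] {g ψ : ℕ → β}
    {k : ℕ → ℕ} (hg : Monotone g) (hgψ : ∀ n, g n ≤ ψ n) (hk : ∀ n, n ≤ k n)
    (h : ∃ᶠ n in atTop, g n = ψ (k n)) :
    ∃ᶠ n in atTop, g n = ψ n :=
  frequently_atTop.2 fun N => by
    obtain ⟨n, hn, hgn⟩ := frequently_atTop.1 h N
    exact ⟨k n, hn.trans (hk n), le_antisymm (hgψ _) (hgn.symm.trans_le (hg (hk n)))⟩

lemma tendsto_atTop_of_min_le_succ {β : Type*} [LinearOrder β] {u v : ℕ → β}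
    (hv : Tendsto v atTop atTop) (hstep : ∀ n, min (v (n + 1)) (u n) ≤ u (n + 1))
    (hfreq : ∃ᶠ n in atTop, v n ≤ u n) :
    Tendsto u atTop atTop := by
  refine tendsto_atTop.2 fun C => ?_
  obtain ⟨N, hN⟩ := eventually_atTop.1 (tendsto_atTop.1 hv C)
  obtain ⟨j, hjN, hj⟩ := frequently_atTop.1 hfreq N
  filter_upwards [eventually_ge_atTop j] with n hn
  induction n, hn using Nat.le_induction with
  | base => exact (hN j hjN).trans hj
  | succ n hjn ih => exact (le_min (hN _ (by omega)) ih).trans (hstep n)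

lemma limsup_eq_of_le_of_frequently_ge {α β : Type*} [ConditionallyCompleteLinearOrder β]
    {f : Filter α} {u : α → β} {a : β} (hle : ∀ᶠ x in f, u x ≤ a) (hge : ∃ᶠ x in f, a ≤ u x) :
    limsup u f = a :=
  le_antisymm (limsup_le_of_le (IsCoboundedUnder.of_frequently_ge hge) hle)
    (le_limsup_of_frequently_le hge (isBoundedUnder_of_eventually_le hle))

lemma tendsto_div_natCast_add_one_atTop {f : ℕ → ℝ}
    (hf : Tendsto (fun n => f n / n) atTop atTop) :
    Tendsto (fun n => f n / ((n : ℝ) + 1)) atTop atTop := by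
  refine (hf.atTop_mul_pos one_pos (tendsto_natCast_div_add_atTop (1 : ℝ))).congr' ?_
  filter_upwards [eventually_ne_atTop 0] with n hn
  field_simp

lemma tendsto_div_natCast_atTop_of_add_one {f : ℕ → ℝ} (hf0 : ∀ n, 0 ≤ f n)
    (hf : Tendsto (fun n => f n / ((n : ℝ) + 1)) atTop atTop) :
    Tendsto (fun n => f n / n) atTop atTop := by
  refine tendsto_atTop_mono' _ ?_ hf
  filter_upwards [eventually_ne_atTop 0] with n hn
  exact div_le_div_of_nonneg_left (hf0 n) (by positivity) (by linarith)

lemma tendsto_atTop_of_div_natCast_add_one {f : ℕ → ℝ} (hf0 : ∀ n, 0 ≤ f n)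
    (hf : Tendsto (fun n => f n / ((n : ℝ) + 1)) atTop atTop) :
    Tendsto f atTop atTop :=
  tendsto_atTop_mono (fun n => div_le_self (hf0 n) (by linarith [n.cast_nonneg (α := ℝ)])) hf

lemma tendsto_comp_div_natCast_add_one {f : ℕ → ℝ} (hf0 : ∀ n, 0 ≤ f n)
    (hf : Tendsto (fun n => f n / ((n : ℝ) + 1)) atTop atTop) {k : ℕ → ℕ}
    (hk : ∀ n, n ≤ k n) :
    Tendsto (fun n => f (k n) / ((n : ℝ) + 1)) atTop atTop :=
  tendsto_atTop_mono (fun n => div_le_div_of_nonneg_left (hf0 _) (by positivity)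
    (by gcongr; exact hk n)) (hf.comp (tendsto_atTop_mono hk tendsto_id))

lemma frequently_le_pow_of_liminf_rpow_inv_eq_one {ψ : ℕ → ℝ} (hψ : ∀ n, 0 ≤ ψ n)
    (h : liminf (fun n => ψ n ^ ((n : ℝ)⁻¹)) atTop = 1) {q : ℝ} (hq : 1 < q) :
    ∃ᶠ n in atTop, ψ n ≤ q ^ n := by
  have hcobdd : IsCoboundedUnder (· ≥ ·) atTop (fun n => ψ n ^ ((n : ℝ)⁻¹)) := by
    by_contra hc
    simp [Real.liminf_of_not_isCoboundedUnder hc] at h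
  refine ((frequently_lt_of_liminf_lt hcobdd (h ▸ hq)).and_eventually
    (eventually_ne_atTop 0)).mono ?_
  rintro n ⟨hn, hn0⟩
  calc ψ n = (ψ n ^ ((n : ℝ)⁻¹)) ^ n := (Real.rpow_inv_natCast_pow (hψ n) hn0).symm
    _ ≤ q ^ n := pow_le_pow_left₀ (Real.rpow_nonneg (hψ n) _) hn.le n

lemma eventually_mul_pow_le_sq_pow_sub {q : ℝ} (hq : 1 < q) (C : ℝ) (k : ℕ) :
    ∀ᶠ p in atTop, C * q ^ p ≤ (q ^ 2) ^ (p - k) := by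
  filter_upwards [((tendsto_pow_atTop_atTop_of_one_lt hq).comp
    (tendsto_sub_atTop_nat (2 * k))).eventually_ge_atTop C, eventually_ge_atTop (2 * k)]
    with p hC hp
  calc C * q ^ p ≤ q ^ (p - 2 * k) * q ^ p := by
        gcongr
        exact hC
    _ = (q ^ 2) ^ (p - k) := by
        rw [← pow_add, ← pow_mul]
        congr 1
        omega

noncomputable def cappedMinorant (m r : ℕ → ℝ) : ℕ → ℝ
  | 0 => m 0
  | n + 1 => min (m (n + 1)) (cappedMinorant m r n * r n)

section CappedMinorant

variable {m r : ℕ → ℝ}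

lemma cappedMinorant_le (n : ℕ) : cappedMinorant m r n ≤ m n := by
  cases n with
  | zero => exact le_rfl
  | succ n => exact min_le_left _ _

lemma cappedMinorant_succ_le_mul (n : ℕ) :
    cappedMinorant m r (n + 1) ≤ cappedMinorant m r n * r n :=
  min_le_right _ _

lemma cappedMinorant_pos (hm : ∀ n, 0 < m n) (hr : ∀ n, 0 < r n) (n : ℕ) :
    0 < cappedMinorant m r n := by
  induction n with
  | zero => exact hm 0
  | succ n ih => exact lt_min (hm _) (mul_pos ih (hr n))

lemma monotone_cappedMinorant (hm : ∀ n, 0 < m n) (hmono : Monotone m) (hr : ∀ n, 1 ≤ r n) :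
    Monotone (cappedMinorant m r) :=
  monotone_nat_of_le_succ fun n => le_min ((cappedMinorant_le n).trans (hmono n.le_succ))
    (le_mul_of_one_le_right
      (cappedMinorant_pos hm (fun k => zero_lt_one.trans_le (hr k)) n).le (hr n))

lemma frequently_cappedMinorant_eq (hm : ∀ n, 0 < m n) (hr : ∀ n, 0 < r n)
    (hmr : ∀ N (c : ℝ), 0 < c → ∃ p, N < p ∧ m p ≤ c * ∏ i ∈ Ico N p, r i) :
    ∃ᶠ n in atTop, cappedMinorant m r n = m n := by
  by_contra hfreq
  obtain ⟨N, hN⟩ := eventually_atTop.1 (not_frequently.1 hfreq)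
  have hprod : ∀ p, N ≤ p →
      cappedMinorant m r p = cappedMinorant m r N * ∏ i ∈ Ico N p, r i := by
    intro p hp
    induction p, hp using Nat.le_induction with
    | base => simp
    | succ p hNp ih =>
      have hstep : cappedMinorant m r (p + 1) = cappedMinorant m r p * r p :=
        (min_choice _ _).resolve_left (hN (p + 1) (by omega))
      rw [hstep, ih, prod_Ico_succ_top hNp, mul_assoc]
  obtain ⟨p, hNp, hp⟩ := hmr N _ (cappedMinorant_pos hm hr N)
  exact hN p hNp.le (le_antisymm (cappedMinorant_le p) (hprod p hNp.le ▸ hp))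

lemma min_div_le_cappedMinorant_succ_div {w : ℕ → ℝ} (hw : ∀ n, 0 < w n) {n : ℕ}
    (hrw : w (n + 1) ≤ r n * w n) (hg : 0 ≤ cappedMinorant m r n) :
    min (m (n + 1) / w (n + 1)) (cappedMinorant m r n / w n) ≤
      cappedMinorant m r (n + 1) / w (n + 1) := by
  rw [cappedMinorant, ← min_div_div_right (hw _).le]
  refine min_le_min_left _ ?_
  rw [div_le_div_iff₀ (hw n) (hw _)]
  calc cappedMinorant m r n * w (n + 1) ≤ cappedMinorant m r n * (r n * w n) := by gcongr
    _ = cappedMinorant m r n * r n * w n := by ring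

lemma tendsto_cappedMinorant_div_atTop {w : ℕ → ℝ} (hm : ∀ n, 0 < m n) (hr : ∀ n, 0 < r n)
    (hw : ∀ n, 0 < w n) (hrw : ∀ n, w (n + 1) ≤ r n * w n)
    (hmw : Tendsto (fun n => m n / w n) atTop atTop)
    (heq : ∃ᶠ n in atTop, cappedMinorant m r n = m n) :
    Tendsto (fun n => cappedMinorant m r n / w n) atTop atTop :=
  tendsto_atTop_of_min_le_succ hmw
    (fun n => min_div_le_cappedMinorant_succ_div hw (hrw n) (cappedMinorant_pos hm hr n).le)
    (heq.mono fun n h => by rw [h])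

lemma tendsto_cappedMinorant_succ_div (hm : ∀ n, 0 < m n) (hmono : Monotone m)
    (hr : ∀ n, 1 ≤ r n) (hr1 : Tendsto r atTop (𝓝 1)) :
    Tendsto (fun n => cappedMinorant m r (n + 1) / cappedMinorant m r n) atTop (𝓝 1) := by
  have hg := cappedMinorant_pos hm (fun k => zero_lt_one.trans_le (hr k))
  refine tendsto_of_tendsto_of_tendsto_of_le_of_le tendsto_const_nhds hr1
    (fun n => (one_le_div (hg n)).2 (monotone_cappedMinorant hm hmono hr n.le_succ))
    (fun n => (div_le_iff₀ (hg n)).2 ?_)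
  rw [mul_comm]
  exact cappedMinorant_succ_le_mul n

end CappedMinorant

def blockIndex (b : ℕ → ℕ) (i : ℕ) : ℕ :=
  Nat.findGreatest (fun k => b k ≤ i) i

section BlockIndex

variable {b : ℕ → ℕ}

lemma blockIndex_le (b : ℕ → ℕ) (i : ℕ) : blockIndex b i ≤ i :=
  Nat.findGreatest_le i

lemma blockIndex_le_of_lt (hb : StrictMono b) {i k : ℕ} (h : i < b k) : blockIndex b i ≤ k := by
  by_contra! hk
  have hbi : b (blockIndex b i) ≤ i :=
    Nat.findGreatest_of_ne_zero (P := fun k => b k ≤ i) rfl (by omega)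
  exact absurd (hb hk) (by omega)

lemma tendsto_blockIndex (hb : StrictMono b) : Tendsto (blockIndex b) atTop atTop :=
  tendsto_atTop.2 fun k => (eventually_ge_atTop (b k)).mono fun _ hi =>
    Nat.le_findGreatest ((hb.id_le k).trans hi) hi

lemma pow_sub_le_prod_comp_blockIndex (hb : StrictMono b) {q : ℕ → ℝ} (hq : Antitone q)
    (hq0 : ∀ k, 0 ≤ q k) (N k : ℕ) :
    q k ^ (b k - N) ≤ ∏ i ∈ Ico N (b k), q (blockIndex b i) := by
  calc q k ^ (b k - N) = ∏ _i ∈ Ico N (b k), q k := by rw [prod_const, Nat.card_Ico]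
    _ ≤ ∏ i ∈ Ico N (b k), q (blockIndex b i) :=
      prod_le_prod (fun _ _ => hq0 k)
        fun i hi => hq (blockIndex_le_of_lt hb (mem_Ico.1 hi).2)

end BlockIndex

theorem exists_rate_of_frequently_le_pow {ψ : ℕ → ℝ}
    (hψ : ∀ q : ℝ, 1 < q → ∃ᶠ n in atTop, ψ n ≤ q ^ n) :
    ∃ r : ℕ → ℝ, Tendsto r atTop (𝓝 1) ∧ (∀ n : ℕ, (n : ℝ) + 2 ≤ r n * (n + 1)) ∧
      ∀ N (c : ℝ), 0 < c → ∃ p, N < p ∧ ψ p ≤ c * ∏ i ∈ Ico N p, r i := by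
  set Q : ℕ → ℝ := fun k => 1 + 1 / ((k : ℝ) + 1)
  have hQ1 : ∀ k, 1 < Q k := fun k => lt_add_of_pos_right 1 (by positivity)
  have hQ : Antitone Q := fun j k hjk => by
    simp only [Q]
    gcongr
  have hQsq : Antitone fun k => Q k ^ 2 := fun j k hjk =>
    pow_le_pow_left₀ (zero_le_one.trans (hQ1 k).le) (hQ hjk) 2
  have hQlim : Tendsto Q atTop (𝓝 1) := by
    simpa [Q] using (tendsto_const_nhds (x := (1 : ℝ))).add tendsto_one_div_add_atTop_nhds_zero_nat
  -- `b k` is a point with `ψ (b k) ≤ Q k ^ b k`, so late that the rate `Q k ^ 2`, which is in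
  -- force up to `b k`, gains the factor `(k + 1) * Q k ^ b k` after index `k`.
  obtain ⟨b, hb, hbψ⟩ := extraction_forall_of_frequently fun k =>
    (hψ _ (hQ1 k)).and_eventually (eventually_mul_pow_le_sq_pow_sub (hQ1 k) ((k : ℝ) + 1) k)
  refine ⟨fun i => Q (blockIndex b i) ^ 2,
    (by simpa using hQlim.pow 2 : Tendsto (fun k => Q k ^ 2) atTop (𝓝 1)).comp
      (tendsto_blockIndex hb), fun n => ?_, fun N c hc => ?_⟩
  · calc (n : ℝ) + 2 = Q n * (n + 1) := by
          simp only [Q]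
          field_simp
          ring
      _ ≤ Q (blockIndex b n) ^ 2 * (n + 1) := by
          gcongr
          exact (le_self_pow₀ (hQ1 n).le two_ne_zero).trans (hQsq (blockIndex_le b n))
  · obtain ⟨k, hNk, hck⟩ := ((eventually_gt_atTop N).and (eventually_ge_atTop ⌈1 / c⌉₊)).exists
    obtain ⟨hψk, hpow⟩ := hbψ k
    have hck' : 1 ≤ c * ((k : ℝ) + 1) := by
      have := (Nat.le_ceil (1 / c)).trans (Nat.cast_le.2 hck)
      rw [div_le_iff₀ hc] at this
      nlinarith
    refine ⟨b k, hNk.trans_le (hb.id_le k), ?_⟩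
    calc ψ (b k) ≤ Q k ^ b k := hψk
      _ ≤ c * ((k + 1) * Q k ^ b k) := by
          rw [← mul_assoc]
          exact le_mul_of_one_le_left (by positivity) hck'
      _ ≤ c * (Q k ^ 2) ^ (b k - k) := by gcongr
      _ ≤ c * (Q k ^ 2) ^ (b k - N) := by
          gcongr
          exact one_le_pow₀ (hQ1 k).le
      _ ≤ c * ∏ i ∈ Ico N (b k), Q (blockIndex b i) ^ 2 := by
          gcongr
          exact pow_sub_le_prod_comp_blockIndex hb hQsq (fun _ => by positivity) N k

/-- If `ψ : ℕ → ℝ_{>0}` satisfies `ψ(n)/n → ∞` and `liminf ψ(n)^{1/n} = 1`,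
then there is a non-decreasing `g : ℕ → ℝ_{>0}` with `g ≤ ψ`, `limsup g/ψ = 1`,
`g(n)/n → ∞`, and `g(n+1)/g(n) → 1`. -/
theorem stmt8 (ψ : ℕ → ℝ) (hψ : ∀ n, 0 < ψ n)
    (hlin : Filter.Tendsto (fun n => ψ n / (n : ℝ)) Filter.atTop Filter.atTop)
    (h : Filter.liminf (fun n => ψ n ^ ((n : ℝ)⁻¹)) Filter.atTop = 1) :
    ∃ g : ℕ → ℝ, (∀ n, 0 < g n) ∧ Monotone g ∧ (∀ n, g n ≤ ψ n) ∧
      Filter.limsup (fun n => g n / ψ n) Filter.atTop = 1 ∧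
      Filter.Tendsto (fun n => g n / (n : ℝ)) Filter.atTop Filter.atTop ∧
      Filter.Tendsto (fun n => g (n + 1) / g n) Filter.atTop (nhds 1) := by
  have hψ0 : ∀ n, 0 ≤ ψ n := fun n => (hψ n).le
  have hψlin := tendsto_div_natCast_add_one_atTop hlin
  obtain ⟨k, hk, hmono, hmψ⟩ :=
    exists_monotone_tail_min (tendsto_atTop_of_div_natCast_add_one hψ0 hψlin)
  set m := ψ ∘ k
  have hm : ∀ n, 0 < m n := fun n => hψ (k n)
  obtain ⟨r, hr1, hrn, hrψ⟩ := exists_rate_of_frequently_le_pow fun q hq =>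
    frequently_le_pow_of_liminf_rpow_inv_eq_one hψ0 h hq
  have hr : ∀ n, 1 ≤ r n := fun n => by nlinarith [hrn n, n.cast_nonneg (α := ℝ)]
  have hr0 : ∀ n, 0 < r n := fun n => zero_lt_one.trans_le (hr n)
  set g := cappedMinorant m r
  have hg := cappedMinorant_pos hm hr0
  have hgmono : Monotone g := monotone_cappedMinorant hm hmono hr
  have hgψ : ∀ n, g n ≤ ψ n := fun n => (cappedMinorant_le n).trans (hmψ n)
  have hgm : ∃ᶠ n in atTop, g n = m n := frequently_cappedMinorant_eq hm hr0 fun N c hc =>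
    (hrψ N c hc).imp fun p hp => ⟨hp.1, (hmψ p).trans hp.2⟩
  refine ⟨g, hg, hgmono, hgψ, ?_, ?_, tendsto_cappedMinorant_succ_div hm hmono hr hr1⟩
  · exact limsup_eq_of_le_of_frequently_ge
      (Eventually.of_forall fun n => div_le_one_of_le₀ (hgψ n) (hψ0 n))
      ((hgmono.frequently_eq_of_frequently_eq_comp hgψ hk hgm).mono fun n hn => by
        rw [hn, div_self (hψ n).ne'])
  · refine tendsto_div_natCast_atTop_of_add_one (fun n => (hg n).le)
      (tendsto_cappedMinorant_div_atTop hm hr0 (fun n => by positivity) (fun n => ?_)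
        (tendsto_comp_div_natCast_add_one hψ0 hψlin hk) hgm)
    push_cast
    linarith [hrn n]
end

section
/- Fix $b, c \in (1,\infty)$ and $d \in (1,c)$. Let $(\Pi_n)_{n\geq 1}$ be a non-decreasing sequence of real numbers $\geq 1$ such that $\Pi_n \geq b^{c^n}$ for infinitely many $n$. Then $\Pi_{n+1} > \max\{\Pi_n^d, b^{d^{n+1}}\}$ for infinitely many $n$. -/
/-!
Suppose instead that `Π (n+1) ≤ max (Π n ^ d) (b ^ d ^ (n+1))` for all `n ≥ N`. Taking logarithms
and dividing by `d ^ (n+1)`, the normalised sequence `v n = log Π n / d ^ n` satisfies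
`v (n+1) ≤ max (v n) (log b)`, so it stays below `M = max (v N) (log b)`. Hence
`log Π n ≤ M d ^ n`, which eventually falls below `c ^ n log b = log (b ^ c ^ n)` since `d < c`.
-/

open Filter Real

theorem le_max_of_forall_succ_le_max {α : Type*} [LinearOrder α] {v : ℕ → α} {a : α} {N : ℕ}
    (hv : ∀ n ≥ N, v (n + 1) ≤ max (v n) a) : ∀ n ≥ N, v n ≤ max (v N) a := by
  intro n hn
  induction n, hn using Nat.le_induction with
  | base => exact le_max_left _ _
  | succ n hn ih => exact (hv n hn).trans (max_le ih (le_max_right _ _))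

theorem eventually_mul_pow_lt_mul_pow {a c d : ℝ} (M : ℝ) (ha : 0 < a) (hd : 0 ≤ d)
    (hdc : d < c) : ∀ᶠ n : ℕ in atTop, M * d ^ n < a * c ^ n := by
  have hc : 0 < c := hd.trans_lt hdc
  have hlim : Tendsto (fun n : ℕ => M * (d / c) ^ n) atTop (nhds 0) := by
    simpa using (tendsto_pow_atTop_nhds_zero_of_lt_one (div_nonneg hd hc.le)
      ((div_lt_one hc).2 hdc)).const_mul M
  filter_upwards [hlim.eventually_lt_const ha] with n hn
  rwa [div_pow, mul_div_assoc', div_lt_iff₀ (pow_pos hc n)] at hn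

theorem log_div_pow_succ_le_max {x y b d : ℝ} (n : ℕ) (hx : 0 < x) (hy : 0 < y) (hb : 0 < b)
    (hd : 0 < d) (h : y ≤ max (x ^ d) (b ^ (d ^ (n + 1)))) :
    log y / d ^ (n + 1) ≤ max (log x / d ^ n) (log b) := by
  have hdn : 0 < d ^ n := pow_pos hd n
  rw [div_le_iff₀ (pow_pos hd _)]
  rcases le_max_iff.1 h with h | h
  · calc log y ≤ log (x ^ d) := log_le_log hy h
      _ = log x / d ^ n * d ^ (n + 1) := by rw [log_rpow hx]; field_simp; ring
      _ ≤ _ := by gcongr; exact le_max_left _ _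
  · calc log y ≤ log (b ^ (d ^ (n + 1))) := log_le_log hy h
      _ = log b * d ^ (n + 1) := by rw [log_rpow hb, mul_comm]
      _ ≤ _ := by gcongr; exact le_max_right _ _

theorem stmt9_general (b c d : ℝ) (hb : 1 < b) (hd1 : 1 < d) (hdc : d < c)
    (P : ℕ → ℝ) (hone : ∀ n, 1 ≤ P n)
    (hinf : ∃ᶠ n in Filter.atTop, b ^ (c ^ n) ≤ P n) :
    ∃ᶠ n in Filter.atTop, max (P n ^ d) (b ^ (d ^ (n + 1))) < P (n + 1) := by
  have hP : ∀ n, 0 < P n := fun n => one_pos.trans_le (hone n)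
  by_contra hcon
  obtain ⟨N, hN⟩ := eventually_atTop.1 (not_frequently.1 hcon)
  set v : ℕ → ℝ := fun n => log (P n) / d ^ n
  have hv : ∀ n ≥ N, v n ≤ max (v N) (log b) := le_max_of_forall_succ_le_max fun n hn =>
    log_div_pow_succ_le_max n (hP n) (hP (n + 1)) (by linarith) (by linarith)
      (not_lt.1 (hN n hn))
  obtain ⟨n, hn, hlt, hnN⟩ := (hinf.and_eventually
    ((eventually_mul_pow_lt_mul_pow (max (v N) (log b)) (log_pos hb) (by linarith) hdc).and
      (eventually_ge_atTop N))).exists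
  have : log b * c ^ n ≤ max (v N) (log b) * d ^ n := calc
    _ = log (b ^ c ^ n) := by rw [log_rpow (by linarith)]; ring
    _ ≤ log (P n) := log_le_log (by positivity) hn
    _ = v n * d ^ n := (div_mul_cancel₀ _ (by positivity)).symm
    _ ≤ _ := mul_le_mul_of_nonneg_right (hv n hnN) (by positivity)
  linarith

/-- Fix `b, c ∈ (1,∞)` and `d ∈ (1,c)`. If `(P n)` is a non-decreasing sequence
of reals `≥ 1` with `P n ≥ b^(c^n)` infinitely often, then
`P (n+1) > max (P n ^ d) (b ^ (d^(n+1)))` infinitely often. -/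
theorem stmt9 (b c d : ℝ) (hb : 1 < b) (hc : 1 < c) (hd1 : 1 < d) (hdc : d < c)
    (P : ℕ → ℝ) (hmono : Monotone P) (hone : ∀ n, 1 ≤ P n)
    (hinf : ∃ᶠ n in Filter.atTop, b ^ (c ^ n) ≤ P n) :
    ∃ᶠ n in Filter.atTop, max (P n ^ d) (b ^ (d ^ (n + 1))) < P (n + 1) :=
  stmt9_general b c d hb hd1 hdc P hone hinf
end

section
/- For integers $n, k \geq 1$, the number of tuples $(\sigma_1,\dots,\sigma_n) \in \mathbb{N}^n$ of positive integers with $2^{kn} < \sigma_1\cdots\sigma_n \leq 2^{(k+1)n}$ is at most $(e(k+2)\cdot 2^{k+1})^n$. -/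
/-!
Grouping each entry `σ i` into the dyadic block `[2 ^ a i, 2 ^ (a i + 1))` with
`a i = ⌊log₂ σ i⌋`, a tuple with product at most `2 ^ M` has `∑ a i ≤ M`, and each block of
exponents contains `2 ^ ∑ a i` tuples. Rankin's trick with `θ = (k + 1) / (k + 2)` bounds the
resulting sum by a product of geometric series, and `(1 + 1 / (k + 1)) ^ (k + 1) ≤ e`.
-/

open Finset Real

def boundedExponents (n M : ℕ) : Finset (Fin n → ℕ) :=
  (Fintype.piFinset fun _ => range (M + 1)).filter fun a => ∑ i, a i ≤ M

lemma card_Ico_two_pow (a : ℕ) : #(Ico (2 ^ a) (2 ^ (a + 1))) = 2 ^ a := by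
  rw [Nat.card_Ico, pow_succ]
  omega

lemma mem_Ico_two_pow_log {m : ℕ} (hm : m ≠ 0) :
    m ∈ Ico (2 ^ Nat.log 2 m) (2 ^ (Nat.log 2 m + 1)) :=
  mem_Ico.2 ⟨Nat.pow_log_le_self 2 hm, Nat.lt_pow_succ_log_self one_lt_two m⟩

lemma sum_log_le_of_prod_le_two_pow {n M : ℕ} {σ : Fin n → ℕ} (hσ : ∀ i, σ i ≠ 0)
    (hprod : ∏ i, σ i ≤ 2 ^ M) : ∑ i, Nat.log 2 (σ i) ≤ M := by
  refine (Nat.pow_le_pow_iff_right one_lt_two).1 ?_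
  calc 2 ^ ∑ i, Nat.log 2 (σ i) = ∏ i, 2 ^ Nat.log 2 (σ i) := prod_pow_eq_pow_sum _ _ _ |>.symm
    _ ≤ ∏ i, σ i := prod_le_prod' fun i _ => Nat.pow_log_le_self 2 (hσ i)
    _ ≤ 2 ^ M := hprod

lemma setOf_prod_le_two_pow_subset (n M : ℕ) :
    {σ : Fin n → ℕ | (∀ i, 1 ≤ σ i) ∧ ∏ i, σ i ≤ 2 ^ M} ⊆
      ↑((boundedExponents n M).biUnion fun a =>
        Fintype.piFinset fun i => Ico (2 ^ a i) (2 ^ (a i + 1))) := by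
  rintro σ ⟨hpos, hprod⟩
  have hσ : ∀ i, σ i ≠ 0 := fun i => Nat.one_le_iff_ne_zero.1 (hpos i)
  have hsum := sum_log_le_of_prod_le_two_pow hσ hprod
  simp only [coe_biUnion, coe_filter, boundedExponents, Set.mem_iUnion, mem_coe,
    Fintype.mem_piFinset, mem_range]
  refine ⟨fun i => Nat.log 2 (σ i), ⟨fun i => Nat.lt_succ_of_le ?_, hsum⟩,
    fun i => mem_Ico_two_pow_log (hσ i)⟩
  exact (single_le_sum (fun j _ => Nat.zero_le _) (mem_univ i)).trans hsum

lemma ncard_le_sum_boundedExponents {n M : ℕ} {s : Set (Fin n → ℕ)}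
    (hs : s ⊆ {σ | (∀ i, 1 ≤ σ i) ∧ ∏ i, σ i ≤ 2 ^ M}) :
    (s.ncard : ℝ) ≤ ∑ a ∈ boundedExponents n M, (2 : ℝ) ^ ∑ i, a i := by
  have hcard := (Set.ncard_le_ncard (hs.trans (setOf_prod_le_two_pow_subset n M))).trans
    ((Set.ncard_coe_finset _).trans_le card_biUnion_le)
  simp only [Fintype.card_piFinset, card_Ico_two_pow, prod_pow_eq_pow_sum] at hcard
  exact_mod_cast hcard

lemma sum_piFinset_range_pow_sum_le {θ : ℝ} (h0 : 0 ≤ θ) (h1 : θ < 1) (n m : ℕ) :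
    ∑ a ∈ Fintype.piFinset (fun _ : Fin n => range m), θ ^ ∑ i, a i ≤ ((1 - θ)⁻¹) ^ n := by
  calc ∑ a ∈ Fintype.piFinset (fun _ : Fin n => range m), θ ^ ∑ i, a i
      = ∏ _i : Fin n, ∑ j ∈ range m, θ ^ j := by
        rw [prod_univ_sum]
        exact sum_congr rfl fun a _ => (prod_pow_eq_pow_sum _ _ _).symm
    _ ≤ ∏ _i : Fin n, (1 - θ)⁻¹ := by
        refine Finset.prod_le_prod (fun _ _ => Finset.sum_nonneg fun j _ => pow_nonneg h0 j)
          fun _ _ => ?_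
        rw [range_eq_Ico, ← one_div, ← pow_zero θ]
        exact geom_sum_Ico_le_of_lt_one h0 h1
    _ = ((1 - θ)⁻¹) ^ n := by simp

/-- Rankin's trick: on `∑ i, a i ≤ M` one has `c ^ ∑ i, a i ≤ (c / θ) ^ M * θ ^ ∑ i, a i`,
and the weighted sum extends over all exponents as a product of geometric series. -/
lemma sum_boundedExponents_pow_le {c θ : ℝ} (hθ : 0 < θ) (hθc : θ ≤ c) (hθ1 : θ < 1)
    (n M : ℕ) :
    ∑ a ∈ boundedExponents n M, c ^ ∑ i, a i ≤ (c / θ) ^ M * ((1 - θ)⁻¹) ^ n := by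
  have hcθ : 1 ≤ c / θ := (one_le_div hθ).2 hθc
  calc ∑ a ∈ boundedExponents n M, c ^ ∑ i, a i
      ≤ ∑ a ∈ boundedExponents n M, (c / θ) ^ M * θ ^ ∑ i, a i := by
        refine sum_le_sum fun a ha => ?_
        calc c ^ ∑ i, a i = (c / θ) ^ (∑ i, a i) * θ ^ ∑ i, a i := by
              rw [← mul_pow, div_mul_cancel₀ c hθ.ne']
          _ ≤ (c / θ) ^ M * θ ^ ∑ i, a i := by
              gcongr
              exact (mem_filter.1 ha).2
    _ ≤ (c / θ) ^ M * ∑ a ∈ Fintype.piFinset (fun _ : Fin n => range (M + 1)),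
          θ ^ ∑ i, a i := by
        rw [← mul_sum]
        exact mul_le_mul_of_nonneg_left
          (sum_le_sum_of_subset_of_nonneg (filter_subset _ _) fun a _ _ => pow_nonneg hθ.le _)
          (pow_nonneg (zero_le_one.trans hcθ) _)
    _ ≤ (c / θ) ^ M * ((1 - θ)⁻¹) ^ n := by
        gcongr
        exact sum_piFinset_range_pow_sum_le hθ.le hθ1 n (M + 1)

lemma two_div_pow_mul_inv_one_sub_le_exp (k : ℕ) :
    (2 / ((k + 1 : ℝ) / (k + 2))) ^ (k + 1) * (1 - (k + 1 : ℝ) / (k + 2))⁻¹ ≤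
      Real.exp 1 * (k + 2) * 2 ^ (k + 1) := by
  have hbase : 2 / ((k + 1 : ℝ) / (k + 2)) = 2 * (1 + ((k + 1 : ℕ) : ℝ)⁻¹) := by
    push_cast; field_simp; ring
  have hinv : (1 - (k + 1 : ℝ) / (k + 2))⁻¹ = k + 2 := by
    field_simp; ring
  rw [hbase, hinv, mul_pow]
  calc 2 ^ (k + 1) * (1 + ((k + 1 : ℕ) : ℝ)⁻¹) ^ (k + 1) * (k + 2)
      ≤ 2 ^ (k + 1) * Real.exp 1 * (k + 2) := by gcongr; exact one_add_inv_pow_le_exp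
    _ = Real.exp 1 * (k + 2) * 2 ^ (k + 1) := by ring

theorem stmt10_general (n k : ℕ) :
    (Set.ncard {σ : Fin n → ℕ | (∀ i, 1 ≤ σ i) ∧
        2 ^ (k * n) < ∏ i, σ i ∧ ∏ i, σ i ≤ 2 ^ ((k + 1) * n)} : ℝ)
      ≤ (Real.exp 1 * (k + 2) * 2 ^ (k + 1)) ^ n := by
  set θ : ℝ := (k + 1) / (k + 2)
  have hθ : 0 < θ := by positivity
  have hθ1 : θ < 1 := (div_lt_one (by positivity)).2 (by linarith)
  calc _ ≤ ∑ a ∈ boundedExponents n ((k + 1) * n), (2 : ℝ) ^ ∑ i, a i :=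
        ncard_le_sum_boundedExponents fun σ hσ => ⟨hσ.1, hσ.2.2⟩
    _ ≤ (2 / θ) ^ ((k + 1) * n) * ((1 - θ)⁻¹) ^ n :=
        sum_boundedExponents_pow_le hθ (by linarith) hθ1 n _
    _ = ((2 / θ) ^ (k + 1) * (1 - θ)⁻¹) ^ n := by rw [pow_mul, mul_pow]
    _ ≤ (Real.exp 1 * (k + 2) * 2 ^ (k + 1)) ^ n := by
        refine pow_le_pow_left₀ ?_ (two_div_pow_mul_inv_one_sub_le_exp k) n
        exact mul_nonneg (pow_nonneg (div_nonneg zero_le_two hθ.le) _)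
          (inv_nonneg.2 (by linarith))

/-- For `n, k ≥ 1`, the number of `n`-tuples of positive integers whose product
lies in `(2^(kn), 2^((k+1)n)]` is at most `(e (k+2) 2^(k+1))^n`. -/
theorem stmt10 (n k : ℕ) (hn : 1 ≤ n) (hk : 1 ≤ k) :
    (Set.ncard {σ : Fin n → ℕ | (∀ i, 1 ≤ σ i) ∧
        2 ^ (k * n) < ∏ i, σ i ∧ ∏ i, σ i ≤ 2 ^ ((k + 1) * n)} : ℝ)
      ≤ (Real.exp 1 * (k + 2) * 2 ^ (k + 1)) ^ n :=
  stmt10_general n k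
end

section
/- Let $\epsilon > 0$, $b \geq 1$, and let $\psi:\mathbb{N}\to\mathbb{R}_{>0}$ satisfy $\psi(n)/n \to \infty$ and $\liminf_{n\to\infty}\psi(n)^{1/n} = b$. Define $c_{n,k} = \psi(k)(b+\epsilon)^{n-k}$ for $1\leq k\leq n$ and $c_{n,k} = \psi(k)$ for $k \geq n+1$, and set $g(n) = \inf_{k\geq 1} c_{n,k}$. Then: (1) $g(n) \leq g(n+1) \leq (b+\epsilon)g(n)$ for all $n$; (2) $g(n) \leq \psi(n)$ for all $n$; and (3) $g(n)/n \to \infty$ as $n \to \infty$. -/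
open Filter Real

lemma exists_theta (B : ℝ) (hB : 1 < B) :
    ∃ θ : ℝ, 0 < θ ∧ θ < 1/2 ∧ 1 < (1/2 : ℝ) ^ θ * B ^ (1 - θ) := by
  have hlogB : 0 < Real.log B := Real.log_pos hB
  have hlog2 : 0 < Real.log 2 := Real.log_pos (by norm_num)
  refine ⟨Real.log B / (2 * (Real.log B + Real.log 2)), by positivity, ?_, ?_⟩
  · rw [div_lt_iff₀ (by positivity)]; nlinarith
  · set θ := Real.log B / (2 * (Real.log B + Real.log 2)) with hθdef
    have hθ0 : 0 < θ := by positivity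
    have hθ2 : θ < 1/2 := by rw [hθdef, div_lt_iff₀ (by positivity)]; nlinarith
    have hB0 : (0:ℝ) < B := by linarith
    have h1 : (0:ℝ) < (1/2 : ℝ) ^ θ * B ^ (1 - θ) := by positivity
    have heq : θ * (2 * (Real.log B + Real.log 2)) = Real.log B := by
      rw [hθdef]; field_simp
    have hlog : 0 < Real.log ((1/2 : ℝ) ^ θ * B ^ (1 - θ)) := by
      rw [Real.log_mul (by positivity) (by positivity),
        Real.log_rpow (by norm_num), Real.log_rpow hB0]
      have : Real.log (1/2) = -Real.log 2 := by rw [one_div, Real.log_inv]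
      rw [this]; nlinarith
    calc (1:ℝ) = Real.exp 0 := by rw [Real.exp_zero]
      _ < Real.exp (Real.log ((1/2 : ℝ) ^ θ * B ^ (1 - θ))) := Real.exp_lt_exp.2 hlog
      _ = _ := Real.exp_log h1

set_option maxHeartbeats 1600000 in
/-- Let `ε > 0`, `b ≥ 1`, `ψ : ℕ → ℝ_{>0}` with `ψ(n)/n → ∞` and
`liminf ψ(n)^{1/n} = b`. With `c n k = ψ k (b+ε)^(n-k)` for `1 ≤ k ≤ n` and `c n k = ψ k`
for `k ≥ n+1`, and `g n = inf_{k ≥ 1} c n k`, one has `g n ≤ g (n+1) ≤ (b+ε) g n`,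
`g n ≤ ψ n`, and `g(n)/n → ∞`. -/
theorem stmt19 (ψ : ℕ → ℝ) (hψ : ∀ n, 1 ≤ n → 0 < ψ n)
    (hlin : Filter.Tendsto (fun n => ψ n / (n : ℝ)) Filter.atTop Filter.atTop)
    (b ε : ℝ) (hb : 1 ≤ b) (hε : 0 < ε)
    (hliminf : Filter.liminf (fun n => ψ n ^ ((n : ℝ)⁻¹)) Filter.atTop = b)
    (c : ℕ → ℕ → ℝ) (hc : ∀ n k, c n k = if k ≤ n then ψ k * (b + ε) ^ (n - k) else ψ k)
    (g : ℕ → ℝ) (hg : ∀ n, g n = sInf {r : ℝ | ∃ k, 1 ≤ k ∧ r = c n k}) :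
    (∀ n, 1 ≤ n → g n ≤ g (n + 1) ∧ g (n + 1) ≤ (b + ε) * g n) ∧
    (∀ n, 1 ≤ n → g n ≤ ψ n) ∧
    Filter.Tendsto (fun n => g n / (n : ℝ)) Filter.atTop Filter.atTop := by
  have hB1 : 1 < b + ε := by linarith
  have hB0 : 0 < b + ε := by linarith
  have hcpos : ∀ n k, 1 ≤ k → 0 < c n k := by
    intro n k hk; rw [hc]
    split
    · exact mul_pos (hψ k hk) (pow_pos hB0 _)
    · exact hψ k hk
  have hne : ∀ n, Set.Nonempty {r : ℝ | ∃ k, 1 ≤ k ∧ r = c n k} :=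
    fun n => ⟨c n 1, 1, le_refl 1, rfl⟩
  have hbdd : ∀ n, BddBelow {r : ℝ | ∃ k, 1 ≤ k ∧ r = c n k} := by
    intro n; refine ⟨0, ?_⟩; rintro r ⟨k, hk, rfl⟩; exact (hcpos n k hk).le
  have hgle : ∀ n k, 1 ≤ k → g n ≤ c n k := by
    intro n k hk; rw [hg]; exact csInf_le (hbdd n) ⟨k, hk, rfl⟩
  have hgge : ∀ n (L : ℝ), (∀ k, 1 ≤ k → L ≤ c n k) → L ≤ g n := by
    intro n L h; rw [hg]
    exact le_csInf (hne n) (by rintro r ⟨k, hk, rfl⟩; exact h k hk)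
  -- monotonicity of c in n
  have hmono : ∀ n k, 1 ≤ k → c n k ≤ c (n + 1) k := by
    intro n k hk; rw [hc, hc]
    by_cases hkn1 : k ≤ n + 1
    · rw [if_pos hkn1]
      by_cases hkn : k ≤ n
      · rw [if_pos hkn]
        have he : n + 1 - k = (n - k) + 1 := by omega
        rw [he, pow_succ]
        nlinarith [mul_pos (hψ k hk) (pow_pos hB0 (n - k))]
      · rw [if_neg hkn]
        have he : n + 1 - k = 0 := by omega
        rw [he, pow_zero, mul_one]
    · rw [if_neg hkn1, if_neg (by omega)]
  have hstep : ∀ n k, 1 ≤ k → c (n + 1) k ≤ (b + ε) * c n k := by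
    intro n k hk; rw [hc, hc]
    by_cases hkn : k ≤ n
    · rw [if_pos (by omega), if_pos hkn]
      have he : n + 1 - k = (n - k) + 1 := by omega
      rw [he, pow_succ]
      exact le_of_eq (by ring)
    · by_cases hkn1 : k ≤ n + 1
      · rw [if_pos hkn1, if_neg hkn]
        have he : n + 1 - k = 0 := by omega
        rw [he, pow_zero, mul_one]
        nlinarith [hψ k hk]
      · rw [if_neg hkn1, if_neg hkn]
        nlinarith [hψ k hk]
  refine ⟨?_, ?_, ?_⟩
  · intro n hn
    constructor
    · exact hgge (n + 1) (g n) (fun k hk => (hgle n k hk).trans (hmono n k hk))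
    · have h1 : g (n + 1) / (b + ε) ≤ g n := by
        apply hgge n
        intro k hk
        rw [div_le_iff₀ hB0]
        calc g (n + 1) ≤ c (n + 1) k := hgle (n + 1) k hk
          _ ≤ (b + ε) * c n k := hstep n k hk
          _ = c n k * (b + ε) := by ring
      have := (div_le_iff₀ hB0).1 h1
      linarith
  · intro n hn
    have h := hgle n n hn
    rw [hc n n, if_pos (le_refl n), Nat.sub_self, pow_zero, mul_one] at h
    exact h
  · rw [tendsto_atTop]
    intro C
    set D := max C 1 with hD
    have hD0 : 0 < D := lt_of_lt_of_le one_pos (le_max_right _ _)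
    -- consequence of the liminf hypothesis
    have hbound : IsBoundedUnder (· ≥ ·) atTop (fun k : ℕ => ψ k ^ ((k : ℝ)⁻¹)) := by
      apply isBoundedUnder_of
      refine ⟨0, fun k => ?_⟩
      rcases Nat.eq_zero_or_pos k with h | h
      · subst h; simp
      · exact Real.rpow_nonneg (hψ k h).le _
    have hev : ∀ᶠ k in atTop, b / 2 < ψ k ^ ((k : ℝ)⁻¹) :=
      eventually_lt_of_lt_liminf (by rw [hliminf]; linarith) hbound
    obtain ⟨K₁, hK₁⟩ := eventually_atTop.1 hev
    -- a uniform lower bound  ψ k ≥ c₀ (1/2)^k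
    set K := max K₁ 1 with hK
    have hSne : (Finset.Icc 1 K).Nonempty :=
      ⟨1, Finset.mem_Icc.2 ⟨le_refl 1, le_max_right _ _⟩⟩
    set c₀ := min 1 ((Finset.Icc 1 K).inf' hSne (fun k => ψ k * 2 ^ k)) with hc₀def
    have hc₀pos : 0 < c₀ := by
      apply lt_min one_pos
      rw [Finset.lt_inf'_iff]
      intro k hkmem
      have hk1 : 1 ≤ k := (Finset.mem_Icc.1 hkmem).1
      have := hψ k hk1
      positivity
    have hc₀1 : c₀ ≤ 1 := min_le_left _ _
    have hψlb : ∀ k, 1 ≤ k → c₀ * (1/2 : ℝ) ^ k ≤ ψ k := by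
      intro k hk
      by_cases hkK : k ≤ K
      · have h1 : c₀ ≤ ψ k * 2 ^ k :=
          le_trans (min_le_right _ _) (Finset.inf'_le _ (Finset.mem_Icc.2 ⟨hk, hkK⟩))
        calc c₀ * (1/2 : ℝ) ^ k ≤ (ψ k * 2 ^ k) * (1/2) ^ k :=
              mul_le_mul_of_nonneg_right h1 (by positivity)
          _ = ψ k * (2 * (1/2)) ^ k := by rw [mul_assoc, ← mul_pow]
          _ = ψ k := by norm_num
      · have hkK1 : K₁ ≤ k := le_trans (le_trans (le_max_left K₁ 1) (not_le.1 hkK).le) (le_refl k)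
        have h2 : b / 2 < ψ k ^ ((k : ℝ)⁻¹) := hK₁ k hkK1
        have hk0 : k ≠ 0 := by omega
        have h3 : (b / 2) ^ k < (ψ k ^ ((k : ℝ)⁻¹)) ^ k :=
          pow_lt_pow_left₀ h2 (by linarith) hk0
        rw [Real.rpow_inv_natCast_pow (hψ k hk).le hk0] at h3
        calc c₀ * (1/2 : ℝ) ^ k ≤ 1 * (1/2) ^ k :=
              mul_le_mul_of_nonneg_right hc₀1 (by positivity)
          _ = (1/2 : ℝ) ^ k := one_mul _
          _ ≤ (b / 2) ^ k := pow_le_pow_left₀ (by norm_num) (by linarith) k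
          _ ≤ ψ k := h3.le
    obtain ⟨θ, hθ0, hθ2, hρ1⟩ := exists_theta (b + ε) hB1
    set ρ := (1/2 : ℝ) ^ θ * (b + ε) ^ (1 - θ) with hρdef
    have hρ0 : 0 < ρ := by positivity
    set s := Real.sqrt ρ with hsdef
    have hs1 : 1 < s := by
      rw [hsdef, show (1:ℝ) = Real.sqrt 1 by simp]
      exact Real.sqrt_lt_sqrt zero_le_one hρ1
    have hρs : ρ = s ^ 2 := (Real.sq_sqrt hρ0.le).symm
    obtain ⟨K₂, hK₂⟩ := eventually_atTop.1 (hlin.eventually_ge_atTop (D / θ))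
    have e1 : ∀ᶠ n : ℕ in atTop, (K₂ : ℝ) / θ ≤ (n : ℝ) :=
      tendsto_natCast_atTop_atTop.eventually_ge_atTop _
    have e2 : ∀ᶠ n : ℕ in atTop, D / (c₀ * (s - 1) ^ 2) ≤ (n : ℝ) :=
      tendsto_natCast_atTop_atTop.eventually_ge_atTop _
    have e3 : ∀ᶠ n : ℕ in atTop, 1 ≤ n := eventually_ge_atTop 1
    filter_upwards [e1, e2, e3] with n h1 h2 h3
    have hn0 : (0 : ℝ) < n := by exact_mod_cast h3
    have h1' : (K₂ : ℝ) ≤ θ * n := by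
      rw [div_le_iff₀ hθ0] at h1; linarith [h1]
    have h2' : D ≤ c₀ * (s - 1) ^ 2 * n := by
      have hquad : (0:ℝ) < c₀ * (s - 1) ^ 2 :=
        mul_pos hc₀pos (pow_pos (by linarith) 2)
      rw [div_le_iff₀ hquad] at h2; linarith [h2]
    have key : D * n ≤ g n := by
      apply hgge n
      intro k hk
      by_cases hkθ : (k : ℝ) ≤ θ * n
      · -- small k : use the exponential lower bound
        have hθn_le_n : θ * n ≤ n := by nlinarith
        have hkn : k ≤ n := by exact_mod_cast hkθ.trans hθn_le_n
        rw [hc, if_pos hkn]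
        have hcast : ((n - k : ℕ) : ℝ) = (n : ℝ) - k := by
          rw [Nat.cast_sub hkn]
        have f1 : (1/2 : ℝ) ^ (θ * (n : ℝ)) ≤ (1/2 : ℝ) ^ (k : ℕ) := by
          rw [← Real.rpow_natCast (1/2 : ℝ) k]
          exact Real.rpow_le_rpow_of_exponent_ge (by norm_num) (by norm_num) hkθ
        have f2 : (b + ε) ^ ((1 - θ) * (n : ℝ)) ≤ (b + ε) ^ (n - k : ℕ) := by
          rw [← Real.rpow_natCast (b + ε) (n - k), hcast]
          exact Real.rpow_le_rpow_of_exponent_le hB1.le (by linarith)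
        have f3 : c₀ * ρ ^ n = c₀ * ((1/2 : ℝ) ^ (θ * (n : ℝ)) * (b + ε) ^ ((1 - θ) * (n : ℝ))) := by
          rw [hρdef, Real.rpow_mul (by norm_num : (0:ℝ) ≤ 1/2),
            Real.rpow_mul hB0.le, Real.rpow_natCast, Real.rpow_natCast, ← mul_pow]
        have f4 : ρ ^ n = (s ^ n) ^ 2 := by rw [hρs]; ring
        have f5 : (n : ℝ) * (s - 1) ≤ s ^ n := by
          have hber := one_add_mul_le_pow (by linarith : (-2 : ℝ) ≤ s - 1) n
          calc (n : ℝ) * (s - 1) ≤ 1 + n * (s - 1) := by linarith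
            _ ≤ (1 + (s - 1)) ^ n := hber
            _ = s ^ n := by ring_nf
        have f6 : D * n ≤ c₀ * ρ ^ n := by
          have f7 : ((n : ℝ) * (s - 1)) ^ 2 ≤ (s ^ n) ^ 2 :=
            pow_le_pow_left₀ (by nlinarith) f5 2
          calc D * n ≤ (c₀ * (s - 1) ^ 2 * n) * n :=
                mul_le_mul_of_nonneg_right h2' hn0.le
            _ = c₀ * ((n : ℝ) * (s - 1)) ^ 2 := by ring
            _ ≤ c₀ * (s ^ n) ^ 2 := mul_le_mul_of_nonneg_left f7 hc₀pos.le
            _ = c₀ * ρ ^ n := by rw [f4]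
        calc D * (n : ℝ) ≤ c₀ * ρ ^ n := f6
          _ = c₀ * ((1/2 : ℝ) ^ (θ * (n : ℝ)) * (b + ε) ^ ((1 - θ) * (n : ℝ))) := f3
          _ ≤ c₀ * ((1/2 : ℝ) ^ (k : ℕ) * (b + ε) ^ (n - k : ℕ)) := by
              apply mul_le_mul_of_nonneg_left _ hc₀pos.le
              exact mul_le_mul f1 f2 (by positivity) (by positivity)
          _ = (c₀ * (1/2 : ℝ) ^ (k : ℕ)) * (b + ε) ^ (n - k : ℕ) := by ring
          _ ≤ ψ k * (b + ε) ^ (n - k : ℕ) :=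
              mul_le_mul_of_nonneg_right (hψlb k hk) (by positivity)
      · -- big k : use ψ k / k → ∞
        push_neg at hkθ
        have hkK₂ : K₂ ≤ k := by exact_mod_cast h1'.trans hkθ.le
        have hψk : D / θ ≤ ψ k / k := hK₂ k hkK₂
        have hk0 : (0 : ℝ) < k := by exact_mod_cast hk
        have h5 : D * n ≤ ψ k := by
          have ha : (D / θ) * k ≤ ψ k := by
            rw [← le_div_iff₀ hk0]; exact hψk
          have hb' : D * n ≤ (D / θ) * k := by
            rw [div_mul_eq_mul_div, le_div_iff₀ hθ0]
            calc D * n * θ = D * (θ * n) := by ring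
              _ ≤ D * k := mul_le_mul_of_nonneg_left hkθ.le hD0.le
          linarith
        rw [hc]
        split
        · calc D * (n : ℝ) ≤ ψ k := h5
            _ = ψ k * 1 := (mul_one _).symm
            _ ≤ ψ k * (b + ε) ^ (n - k) :=
                mul_le_mul_of_nonneg_left (one_le_pow₀ hB1.le) (hψ k hk).le
        · exact h5
    have hCD : C ≤ D := le_max_left C 1
    show C ≤ g n / (n : ℝ)
    rw [le_div_iff₀ hn0]
    nlinarith [key, hCD, hn0]
end
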